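/- arXiv:2411.17010 — 12 statements merged into one kernel-verified Lean document; each statement's English description precedes it below -/
import Mathlib

section
/- Let S be a numerical semigroup generated by g_1 < g_2 < ... < g_k and let g = g_1 + ... + g_k. Fix n in S with n > g_1^2 · g. If a factorization z of n attains its maximum coordinate at an index i with 2 ≤ i ≤ k (i.e., max(z) = z_i), then there exists another factorization z' of n with max(z') > max(z). -/
/-- `z` is a factorization of `n` with respect to the generators `g`. -/
def IsFactorization {k : ℕ} (g : Fin k → ℕ) (n : ℕ) (z : Fin k → ℕ) : Prop :=
  ∑ i, z i * g i = n

theorem stmt1 {k : ℕ} (g : Fin (k + 1) → ℕ) (hpos : ∀ i, 0 < g i) (hmono : StrictMono g)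
    (n : ℕ) (hn : n > (g 0) ^ 2 * ∑ i, g i)
    (z : Fin (k + 1) → ℕ) (hz : IsFactorization g n z)
    (i : Fin (k + 1)) (hi : i ≠ 0) (hmax : Finset.univ.sup z = z i) :
    ∃ z' : Fin (k + 1) → ℕ, IsFactorization g n z' ∧
      Finset.univ.sup z' > Finset.univ.sup z := by
  classical
  have h0pos : 0 < g 0 := hpos 0
  have hgi : g 0 + 1 ≤ g i := by
    have : g 0 < g i := hmono (by
      rcases Fin.eq_zero_or_eq_succ i with h | ⟨j, rfl⟩
      · exact absurd h hi
      · exact Fin.succ_pos j)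
    omega
  -- z i > g 0 ^ 2
  have hsum_le : n ≤ z i * ∑ j, g j := by
    rw [← hz, Finset.mul_sum]
    refine Finset.sum_le_sum fun j _ => Nat.mul_le_mul_right _ ?_
    rw [← hmax]; exact Finset.le_sup (Finset.mem_univ j)
  have hzi : g 0 ^ 2 < z i := by
    by_contra h
    push_neg at h
    have : n ≤ g 0 ^ 2 * ∑ j, g j :=
      le_trans hsum_le (Nat.mul_le_mul_right _ h)
    omega
  set t : ℕ := z i / g 0 with ht
  have hdm : g 0 * t + z i % g 0 = z i := Nat.div_add_mod (z i) (g 0)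
  have hmod : z i % g 0 < g 0 := Nat.mod_lt _ h0pos
  have htg0 : g 0 ≤ t := by
    rw [ht, Nat.le_div_iff_mul_le h0pos]
    nlinarith [sq_nonneg (g 0)]
  have htle : t * g 0 ≤ z i := by
    rw [mul_comm]; omega
  have hkey : z i < t * g i := by
    have h1 : t * (g 0 + 1) ≤ t * g i := Nat.mul_le_mul_left t hgi
    have h2 : t * g 0 = g 0 * t := by ring
    nlinarith
  set z' : Fin (k + 1) → ℕ := fun j =>
    if j = 0 then z 0 + t * g i else if j = i then z i - t * g 0 else z j with hz'
  have hi' : (0 : Fin (k + 1)) ≠ i := fun h => hi h.symm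
  have hz'0 : z' 0 = z 0 + t * g i := by simp [hz']
  have hz'i : z' i = z i - t * g 0 := by simp [hz', hi]
  refine ⟨z', ?_, ?_⟩
  · unfold IsFactorization
    have hsplit : ∀ w : Fin (k + 1) → ℕ,
        ∑ j, w j * g j = w 0 * g 0 + w i * g i + ∑ j ∈ Finset.univ \ {0, i}, w j * g j := by
      intro w
      rw [← Finset.sum_sdiff (Finset.subset_univ ({0, i} : Finset (Fin (k + 1))))]
      rw [Finset.sum_pair hi']
      ring
    rw [hsplit z', ← hz, hsplit z]
    have hrest : ∑ j ∈ Finset.univ \ {0, i}, z' j * g j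
        = ∑ j ∈ Finset.univ \ {0, i}, z j * g j := by
      refine Finset.sum_congr rfl fun j hj => ?_
      simp only [Finset.mem_sdiff, Finset.mem_insert, Finset.mem_singleton] at hj
      have hj0 : j ≠ 0 := fun h => hj.2 (Or.inl h)
      have hji : j ≠ i := fun h => hj.2 (Or.inr h)
      simp [hz', hj0, hji]
    rw [hrest, hz'0, hz'i]
    have e1 : (z i - t * g 0) * g i = z i * g i - t * g 0 * g i := Nat.sub_mul _ _ _
    have e2 : t * g 0 * g i ≤ z i * g i := Nat.mul_le_mul_right _ htle
    have e3 : t * g i * g 0 = t * g 0 * g i := by ring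
    rw [Nat.add_mul, e1]
    omega
  · rw [hmax]
    have : z' 0 ≤ Finset.univ.sup z' := Finset.le_sup (Finset.mem_univ 0)
    rw [hz'0] at this
    omega
end

section
/- Let S be a numerical semigroup generated by g_1 < g_2 < ... < g_k, let g = g_1 + ... + g_k, and write the Apéry set Ap(S; g_1) = {a_0, a_1, ..., a_{g_1 - 1}} where a_j ≡ j (mod g_1). For all n in S with n > g_1^2 · g and n ≡ i (mod g_1), the maximum infinity-length over all factorizations of n equals (n - a_i)/g_1. -/
/-- Membership in the numerical semigroup generated by `g`. -/
def MemSgp {k : ℕ} (g : Fin k → ℕ) (n : ℕ) : Prop :=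
  ∃ z, IsFactorization g n z

theorem stmt2 {k : ℕ} (g : Fin (k + 1) → ℕ) (hpos : ∀ i, 0 < g i) (hmono : StrictMono g)
    (n : ℕ) (hn : MemSgp g n) (hbig : n > (g 0) ^ 2 * ∑ i, g i)
    (a : ℕ) (haS : MemSgp g a) (hares : a % g 0 = n % g 0)
    (hamin : ∀ s, MemSgp g s → s % g 0 = n % g 0 → a ≤ s) :
    IsGreatest {m | ∃ z, IsFactorization g n z ∧ m = Finset.univ.sup z}
      ((n - a) / g 0) := by
  have hG0 : 0 < g 0 := hpos 0
  have haln : a ≤ n := hamin n hn rfl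
  have hdvd : g 0 ∣ n - a := (Nat.modEq_iff_dvd' haln).mp hares
  have ht : (n - a) / g 0 * g 0 = n - a := Nat.div_mul_cancel hdvd
  set t := (n - a) / g 0 with htdef
  have htn : a + t * g 0 = n := by omega
  set T := ∑ i, g i with hT
  have hT0 : 0 < T :=
    lt_of_lt_of_le hG0 (Finset.single_le_sum (f := g) (fun i _ => Nat.zero_le _)
      (Finset.mem_univ 0))
  -- Apéry bound: a ≤ (g 0 - 1) * T
  have haB : a ≤ (g 0 - 1) * T := by
    obtain ⟨z0, hz0⟩ := hn
    have hsplit : n = (∑ i, (z0 i % g 0) * g i) + (∑ i, (z0 i / g 0) * g i) * g 0 := by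
      rw [← hz0, Finset.sum_mul, ← Finset.sum_add_distrib]
      refine Finset.sum_congr rfl fun i _ => ?_
      calc z0 i * g i = (g 0 * (z0 i / g 0) + z0 i % g 0) * g i := by
            rw [Nat.div_add_mod]
        _ = z0 i % g 0 * g i + z0 i / g 0 * g i * g 0 := by ring
    have hres : (∑ i, (z0 i % g 0) * g i) % g 0 = n % g 0 := by
      conv_rhs => rw [hsplit]
      rw [Nat.add_mul_mod_self_right]
    have hle : a ≤ ∑ i, (z0 i % g 0) * g i :=
      hamin _ ⟨fun i => z0 i % g 0, rfl⟩ hres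
    refine hle.trans ?_
    rw [Finset.mul_sum]
    refine Finset.sum_le_sum fun i _ => Nat.mul_le_mul_right _ ?_
    have := Nat.mod_lt (z0 i) hG0
    omega
  have hBt : (g 0 - 1) * T < t := by
    obtain ⟨u, hu⟩ := Nat.exists_eq_add_of_le hG0
    have hu1 : g 0 - 1 = u := by omega
    have h5 : u * T * (1 + u) + a < n := by
      have h6 : a ≤ u * T := by rw [← hu1]; exact haB
      have h7 : (1 + u) ^ 2 * T < n := by rw [← hu]; exact hbig
      nlinarith
    have h8 : u * T * (1 + u) < t * (1 + u) := by
      have h9 : t * (1 + u) = n - a := by rw [← hu]; exact ht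
      omega
    rw [hu1]
    exact Nat.lt_of_mul_lt_mul_right h8
  constructor
  · -- membership : there is a factorization with sup exactly t
    obtain ⟨w, hw⟩ := haS
    have hw0 : w 0 = 0 := by
      by_contra h0
      have h1 : 1 ≤ w 0 := Nat.pos_of_ne_zero h0
      have hwsplit : a = w 0 * g 0 + ∑ i : Fin k, w i.succ * g i.succ := by
        rw [← hw, Fin.sum_univ_succ]
      have hg0w : g 0 ≤ w 0 * g 0 := Nat.le_mul_of_pos_left (g 0) h1
      have hag : g 0 ≤ a := by omega
      have hsub : MemSgp g (a - g 0) := by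
        refine ⟨Function.update w 0 (w 0 - 1), ?_⟩
        unfold IsFactorization
        rw [Fin.sum_univ_succ, Function.update_self]
        have htail : ∀ i : Fin k, Function.update w 0 (w 0 - 1) i.succ = w i.succ :=
          fun i => Function.update_of_ne (Fin.succ_ne_zero i) _ _
        simp_rw [htail]
        have h3 : (w 0 - 1) * g 0 = w 0 * g 0 - 1 * g 0 := Nat.sub_mul _ _ _
        rw [one_mul] at h3
        omega
      have hres : (a - g 0) % g 0 = n % g 0 := by
        have h4 : (a - g 0 + g 0) % g 0 = (a - g 0) % g 0 := Nat.add_mod_right _ _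
        rw [Nat.sub_add_cancel hag] at h4
        omega
      have := hamin _ hsub hres
      omega
    have hwle : ∀ i, w i ≤ (g 0 - 1) * T := by
      intro i
      have h1 : w i * g i ≤ a := by
        rw [← hw]
        exact Finset.single_le_sum (f := fun j => w j * g j) (fun j _ => Nat.zero_le _)
          (Finset.mem_univ i)
      have h2 : w i ≤ w i * g i := Nat.le_mul_of_pos_right _ (hpos i)
      omega
    refine ⟨Function.update w 0 t, ?_, ?_⟩
    · unfold IsFactorization
      rw [Fin.sum_univ_succ, Function.update_self]
      have htail : ∀ i : Fin k, Function.update w 0 t i.succ = w i.succ :=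
        fun i => Function.update_of_ne (Fin.succ_ne_zero i) _ _
      simp_rw [htail]
      have hwsplit : a = w 0 * g 0 + ∑ i : Fin k, w i.succ * g i.succ := by
        rw [← hw, Fin.sum_univ_succ]
      rw [hw0] at hwsplit
      omega
    · refine (le_antisymm ?_ ?_).symm
      · refine Finset.sup_le fun i _ => ?_
        rcases eq_or_ne i 0 with rfl | hi
        · rw [Function.update_self]
        · rw [Function.update_of_ne hi]
          exact ((hwle i).trans_lt hBt).le
      · have h := Finset.le_sup (f := Function.update w 0 t) (Finset.mem_univ 0)
        rwa [Function.update_self] at h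
  · -- upper bound
    rintro m ⟨z, hz, rfl⟩
    obtain ⟨l, -, hl⟩ := Finset.exists_mem_eq_sup Finset.univ Finset.univ_nonempty z
    rw [hl]
    have hml : ∀ i, z i ≤ z l := fun i => hl ▸ Finset.le_sup (Finset.mem_univ i)
    have hnle : n ≤ z l * T := by
      rw [← hz, hT, Finset.mul_sum]
      exact Finset.sum_le_sum fun i _ => Nat.mul_le_mul_right _ (hml i)
    have hzlbig : g 0 * g 0 < z l := by
      have h1 : g 0 ^ 2 * T < z l * T := lt_of_lt_of_le hbig hnle
      have h2 := Nat.lt_of_mul_lt_mul_right h1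
      nlinarith
    rw [Nat.le_div_iff_mul_le hG0]
    suffices hsuff : z l * g 0 + a ≤ n by omega
    rcases eq_or_ne l 0 with rfl | hl0
    · -- reduce coordinate 0 to zero
      have hsplit : n = (∑ i : Fin k, z i.succ * g i.succ) + z 0 * g 0 := by
        rw [← hz, Fin.sum_univ_succ]; ring
      have hmem : MemSgp g (∑ i : Fin k, z i.succ * g i.succ) := by
        refine ⟨Function.update z 0 0, ?_⟩
        unfold IsFactorization
        rw [Fin.sum_univ_succ, Function.update_self]
        have htail : ∀ i : Fin k, Function.update z 0 0 i.succ = z i.succ :=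
          fun i => Function.update_of_ne (Fin.succ_ne_zero i) _ _
        simp_rw [htail]
        ring
      have hres : (∑ i : Fin k, z i.succ * g i.succ) % g 0 = n % g 0 := by
        conv_rhs => rw [hsplit]
        rw [Nat.add_mul_mod_self_right]
      have := hamin _ hmem hres
      omega
    · -- reduce coordinate l modulo g 0
      set q := z l / g 0 with hq
      set r := z l % g 0 with hr
      have hqr : g 0 * q + r = z l := Nat.div_add_mod _ _
      have hrlt : r < g 0 := hr ▸ Nat.mod_lt _ hG0
      have hqbig : g 0 ≤ q := Nat.le_div_iff_mul_le hG0 |>.mpr hzlbig.le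
      have hgl : g 0 < g l := hmono (Fin.pos_of_ne_zero hl0)
      set E := ∑ i ∈ Finset.univ.erase l, z i * g i with hE
      have hnsplit : n = z l * g l + E := by
        rw [← hz, ← Finset.add_sum_erase _ _ (Finset.mem_univ l)]
      set s := r * g l + E with hs
      have hmem : MemSgp g s := by
        refine ⟨Function.update z l r, ?_⟩
        unfold IsFactorization
        rw [← Finset.add_sum_erase _ _ (Finset.mem_univ l), Function.update_self]
        rw [hs, hE]
        congr 1
        exact Finset.sum_congr rfl fun i hi => by
          rw [Function.update_of_ne (Finset.ne_of_mem_erase hi)]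
      have hns : n = s + q * g l * g 0 := by
        rw [hnsplit, hs, ← hqr]
        ring
      have hres : s % g 0 = n % g 0 := by
        conv_rhs => rw [hns]
        rw [Nat.add_mul_mod_self_right]
      have has : a ≤ s := hamin _ hmem hres
      have hkey : z l * g 0 ≤ q * g l * g 0 := by
        have h1 : r ≤ q := by omega
        have h2 : z l ≤ q * g l := by
          calc z l = g 0 * q + r := hqr.symm
            _ ≤ g 0 * q + q := by omega
            _ = q * (g 0 + 1) := by ring
            _ ≤ q * g l := Nat.mul_le_mul_left _ hgl
        exact Nat.mul_le_mul_right _ h2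
      omega
end

section
/- Let S be a numerical semigroup generated by g_1, ..., g_k and let g = g_1 + ... + g_k. For all n in S with n > g_1^2 · g, the maximum infinity-length of factorizations satisfies ℓ_∞^M(n) = ℓ_∞^M(n - g_1) + 1. -/
open Finset

lemma sum_split {k : ℕ} (f : Fin (k + 1) → ℕ) (j : Fin (k + 1)) (hj : j ≠ 0) :
    ∑ i, f i = f 0 + f j + ∑ i ∈ (Finset.univ.erase 0).erase j, f i := by
  have hjm : j ∈ (Finset.univ : Finset (Fin (k + 1))).erase 0 :=
    Finset.mem_erase.mpr ⟨hj, Finset.mem_univ _⟩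
  rw [← Finset.add_sum_erase _ f (Finset.mem_univ 0), ← Finset.add_sum_erase _ f hjm]
  ring

lemma sum_split1 {k : ℕ} (f : Fin (k + 1) → ℕ) :
    ∑ i, f i = f 0 + ∑ i ∈ Finset.univ.erase 0, f i := by
  rw [← Finset.add_sum_erase _ f (Finset.mem_univ 0)]

lemma sup_mul_sum_le {k : ℕ} (g z : Fin k → ℕ) :
    ∑ i, z i * g i ≤ (Finset.univ.sup z) * ∑ i, g i := by
  rw [Finset.mul_sum]
  exact Finset.sum_le_sum fun i _ => Nat.mul_le_mul_right _ (Finset.le_sup (Finset.mem_univ i))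

lemma down {k : ℕ} (g : Fin (k + 1) → ℕ) (hpos : ∀ i, 0 < g i) (hmono : StrictMono g)
    (z : Fin (k + 1) → ℕ) (hM : (g 0) ^ 2 ≤ Finset.univ.sup z) :
    ∃ w : Fin (k + 1) → ℕ, (∑ i, w i * g i) + g 0 = ∑ i, z i * g i ∧
      Finset.univ.sup z - 1 ≤ Finset.univ.sup w := by
  obtain ⟨j, -, hj⟩ := Finset.exists_mem_eq_sup Finset.univ Finset.univ_nonempty z
  have hg0 : 0 < g 0 := hpos 0
  have hM1 : 1 ≤ Finset.univ.sup z := le_trans (by nlinarith) hM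
  by_cases h0 : j = 0
  · subst h0
    refine ⟨fun i => if i = 0 then z 0 - 1 else z i, ?_, ?_⟩
    · rw [sum_split1 (fun i => (if i = 0 then z 0 - 1 else z i) * g i),
        sum_split1 (fun i => z i * g i)]
      have hR : ∑ i ∈ Finset.univ.erase 0, (if i = 0 then z 0 - 1 else z i) * g i
          = ∑ i ∈ Finset.univ.erase 0, z i * g i := by
        refine Finset.sum_congr rfl fun i hi => ?_
        rw [if_neg (Finset.mem_erase.mp hi).1]
      rw [hR]
      simp only [if_pos rfl]
      have hz0 : 1 ≤ z 0 := by omega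
      zify [hz0]
      simp only [if_true]
      ring
    · have : z 0 - 1 ≤ Finset.univ.sup (fun i => if i = 0 then z 0 - 1 else z i) := by
        have := Finset.le_sup (f := fun i => if i = 0 then z 0 - 1 else z i)
          (Finset.mem_univ (0 : Fin (k + 1)))
        simpa using this
      omega
  · set M := Finset.univ.sup z with hMdef
    set q := M / g 0 with hqdef
    have hqm : g 0 * q + M % g 0 = M := Nat.div_add_mod M (g 0)
    have hr : M % g 0 < g 0 := Nat.mod_lt _ hg0
    have hqg : g 0 ≤ q := by
      rw [hqdef, Nat.le_div_iff_mul_le hg0]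
      nlinarith
    have hgj : g 0 + 1 ≤ g j := hmono (Fin.pos_of_ne_zero h0)
    have h2 : g 0 * q ≤ z j := by rw [← hj]; omega
    have hkey : M + 1 ≤ q * g j := by
      calc M + 1 = g 0 * q + M % g 0 + 1 := by rw [hqm]
        _ ≤ g 0 * q + q := by omega
        _ = q * (g 0 + 1) := by ring
        _ ≤ q * g j := Nat.mul_le_mul_left _ hgj
    have h1 : 1 ≤ q * g j := by omega
    refine ⟨fun i => if i = 0 then z 0 + (q * g j - 1) else if i = j then z j - g 0 * q
      else z i, ?_, ?_⟩
    · rw [sum_split (fun i => (if i = 0 then z 0 + (q * g j - 1) else if i = j then z j - g 0 * q else z i) * g i) j h0,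
        sum_split (fun i => z i * g i) j h0]
      have hR : ∑ i ∈ (Finset.univ.erase 0).erase j,
          (if i = 0 then z 0 + (q * g j - 1) else if i = j then z j - g 0 * q else z i) * g i
          = ∑ i ∈ (Finset.univ.erase 0).erase j, z i * g i := by
        refine Finset.sum_congr rfl fun i hi => ?_
        have hi1 := (Finset.mem_erase.mp hi).1
        have hi2 := (Finset.mem_erase.mp (Finset.mem_erase.mp hi).2).1
        rw [if_neg hi2, if_neg hi1]
      rw [hR]
      have h0' : (0 : Fin (k + 1)) ≠ j := Ne.symm h0
      simp only [if_pos rfl, if_neg h0, if_neg h0']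
      zify [h1, h2]
      simp only [if_true]
      ring
    · have hle : z 0 + (q * g j - 1) ≤ Finset.univ.sup
          (fun i => if i = 0 then z 0 + (q * g j - 1) else if i = j then z j - g 0 * q else z i) := by
        have := Finset.le_sup (f := fun i => if i = 0 then z 0 + (q * g j - 1)
          else if i = j then z j - g 0 * q else z i) (Finset.mem_univ (0 : Fin (k + 1)))
        simpa using this
      omega

lemma up {k : ℕ} (g : Fin (k + 1) → ℕ) (hpos : ∀ i, 0 < g i) (hmono : StrictMono g)
    (w : Fin (k + 1) → ℕ) (hM : (g 0) ^ 2 ≤ Finset.univ.sup w) :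
    ∃ z : Fin (k + 1) → ℕ, (∑ i, z i * g i) = (∑ i, w i * g i) + g 0 ∧
      Finset.univ.sup w + 1 ≤ Finset.univ.sup z := by
  obtain ⟨j, -, hj⟩ := Finset.exists_mem_eq_sup Finset.univ Finset.univ_nonempty w
  have hg0 : 0 < g 0 := hpos 0
  by_cases h0 : j = 0
  · subst h0
    refine ⟨fun i => if i = 0 then w 0 + 1 else w i, ?_, ?_⟩
    · rw [sum_split1 (fun i => (if i = 0 then w 0 + 1 else w i) * g i),
        sum_split1 (fun i => w i * g i)]
      have hR : ∑ i ∈ Finset.univ.erase 0, (if i = 0 then w 0 + 1 else w i) * g i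
          = ∑ i ∈ Finset.univ.erase 0, w i * g i := by
        refine Finset.sum_congr rfl fun i hi => ?_
        rw [if_neg (Finset.mem_erase.mp hi).1]
      rw [hR]
      simp only [if_pos rfl]
      simp only [if_true]
      ring
    · have hle : w 0 + 1 ≤ Finset.univ.sup (fun i => if i = 0 then w 0 + 1 else w i) := by
        have := Finset.le_sup (f := fun i => if i = 0 then w 0 + 1 else w i)
          (Finset.mem_univ (0 : Fin (k + 1)))
        simpa using this
      omega
  · set M := Finset.univ.sup w with hMdef
    set q := M / g 0 with hqdef
    have hqm : g 0 * q + M % g 0 = M := Nat.div_add_mod M (g 0)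
    have hr : M % g 0 < g 0 := Nat.mod_lt _ hg0
    have hqg : g 0 ≤ q := by
      rw [hqdef, Nat.le_div_iff_mul_le hg0]
      nlinarith
    have hgj : g 0 + 1 ≤ g j := hmono (Fin.pos_of_ne_zero h0)
    have h2 : g 0 * q ≤ w j := by rw [← hj]; omega
    have hkey : M + 1 ≤ q * g j + 1 := by
      calc M + 1 = g 0 * q + M % g 0 + 1 := by rw [hqm]
        _ ≤ q * (g 0 + 1) + 1 := by
            have : q * (g 0 + 1) = g 0 * q + q := by ring
            omega
        _ ≤ q * g j + 1 := by
            have := Nat.mul_le_mul_left q hgj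
            omega
    refine ⟨fun i => if i = 0 then w 0 + (q * g j + 1) else if i = j then w j - g 0 * q
      else w i, ?_, ?_⟩
    · rw [sum_split (fun i => (if i = 0 then w 0 + (q * g j + 1) else if i = j then w j - g 0 * q else w i) * g i) j h0,
        sum_split (fun i => w i * g i) j h0]
      have hR : ∑ i ∈ (Finset.univ.erase 0).erase j,
          (if i = 0 then w 0 + (q * g j + 1) else if i = j then w j - g 0 * q else w i) * g i
          = ∑ i ∈ (Finset.univ.erase 0).erase j, w i * g i := by
        refine Finset.sum_congr rfl fun i hi => ?_
        have hi1 := (Finset.mem_erase.mp hi).1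
        have hi2 := (Finset.mem_erase.mp (Finset.mem_erase.mp hi).2).1
        rw [if_neg hi2, if_neg hi1]
      rw [hR]
      have h0' : (0 : Fin (k + 1)) ≠ j := Ne.symm h0
      simp only [if_pos rfl, if_neg h0, if_neg h0']
      zify [h2]
      simp only [if_true]
      ring
    · have hle : w 0 + (q * g j + 1) ≤ Finset.univ.sup
          (fun i => if i = 0 then w 0 + (q * g j + 1) else if i = j then w j - g 0 * q else w i) := by
        have := Finset.le_sup (f := fun i => if i = 0 then w 0 + (q * g j + 1)
          else if i = j then w j - g 0 * q else w i) (Finset.mem_univ (0 : Fin (k + 1)))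
        simpa using this
      omega

theorem stmt3 {k : ℕ} (g : Fin (k + 1) → ℕ) (hpos : ∀ i, 0 < g i) (hmono : StrictMono g)
    (n : ℕ) (hn : ∃ z, IsFactorization g n z) (hbig : n > (g 0) ^ 2 * ∑ i, g i)
    (L : ℕ)
    (hL : IsGreatest {m | ∃ z, IsFactorization g (n - g 0) z ∧ m = Finset.univ.sup z} L) :
    IsGreatest {m | ∃ z, IsFactorization g n z ∧ m = Finset.univ.sup z} (L + 1) := by
  obtain ⟨⟨w, hw, hwsup⟩, hub⟩ := hL
  have hg0 : 0 < g 0 := hpos 0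
  have hg0le : g 0 ≤ ∑ i, g i :=
    Finset.single_le_sum (fun i _ => Nat.zero_le _) (Finset.mem_univ 0)
  have hGpos : 0 < ∑ i, g i := lt_of_lt_of_le hg0 hg0le
  have hng0 : g 0 ≤ n := by nlinarith
  -- upper bound part
  have hub' : ∀ m ∈ {m | ∃ z, IsFactorization g n z ∧ m = Finset.univ.sup z}, m ≤ L + 1 := by
    rintro m ⟨z, hz, rfl⟩
    have h1 : n ≤ Finset.univ.sup z * ∑ i, g i := hz ▸ sup_mul_sum_le g z
    have hMge : (g 0) ^ 2 ≤ Finset.univ.sup z := by nlinarith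
    obtain ⟨w', hw', hsup'⟩ := down g hpos hmono z hMge
    rw [hz] at hw'
    have hmem : Finset.univ.sup w' ≤ L :=
      hub ⟨w', Nat.eq_sub_of_add_eq hw', rfl⟩
    omega
  constructor
  · -- membership
    have hLg : (g 0) ^ 2 ≤ L := by
      have h1 : n - g 0 ≤ Finset.univ.sup w * ∑ i, g i := hw ▸ sup_mul_sum_le g w
      rw [← hwsup] at h1
      have h2 : n ≤ L * ∑ i, g i + g 0 := by omega
      nlinarith
    obtain ⟨z, hz, hsup⟩ := up g hpos hmono w (hwsup ▸ hLg)
    rw [hw] at hz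
    have hzn : IsFactorization g n z := by
      unfold IsFactorization
      omega
    have hle : Finset.univ.sup z ≤ L + 1 := hub' _ ⟨z, hzn, rfl⟩
    have : L + 1 = Finset.univ.sup z := by omega
    exact ⟨z, hzn, this⟩
  · exact hub'
end

section
/- Let S be a numerical semigroup generated by g_1, ..., g_k, let g = g_1 + ... + g_k, and write Ap(S; g) = {0, a_1, ..., a_{g-1}} with a_j ≡ j (mod g). For n in S with n > g^2, letting i in {0, 1, ..., g-1} satisfy i ≡ -n (mod g), the minimum infinity-length over all factorizations of n equals (n + a_i)/g. -/
theorem stmt5 {k : ℕ} (g : Fin k → ℕ) (hpos : ∀ i, 0 < g i)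
    (n : ℕ) (hn : MemSgp g n) (hbig : n > (∑ i, g i) ^ 2)
    (a : ℕ) (haS : MemSgp g a) (hares : (a + n) % (∑ i, g i) = 0)
    (hamin : ∀ s, MemSgp g s → (s + n) % (∑ i, g i) = 0 → a ≤ s) :
    IsLeast {m | ∃ z, IsFactorization g n z ∧ m = Finset.univ.sup z}
      ((n + a) / ∑ i, g i) := by
  classical
  set G := ∑ i, g i with hGdef
  have hk : k ≠ 0 := by
    rintro rfl
    obtain ⟨z, hz⟩ := hn
    simp only [IsFactorization, Finset.univ_eq_empty, Finset.sum_empty] at hz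
    have hG0 : G = 0 := by simp [hGdef]
    rw [hG0, ← hz] at hbig
    omega
  have hG : 0 < G := by
    rw [hGdef]
    apply Finset.sum_pos (fun i _ => hpos i)
    have : Nonempty (Fin k) := Fin.pos_iff_nonempty.mp (Nat.pos_of_ne_zero hk)
    exact Finset.univ_nonempty
  have hdvd : G ∣ n + a := by
    have := hares
    rw [Nat.add_comm a n] at this
    exact Nat.dvd_of_mod_eq_zero this
  set M := (n + a) / G with hMdef
  have hMG : M * G = n + a := Nat.div_mul_cancel hdvd
  have hMgtG : G < M := by
    have h1 : G * G < M * G := by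
      rw [hMG]
      have : G ^ 2 = G * G := sq G
      omega
    exact lt_of_mul_lt_mul_right h1 (Nat.zero_le G)
  -- no factorization of a has all coordinates positive
  have hno : ∀ y : Fin k → ℕ, (∑ i, y i * g i = a) → ∃ i, y i = 0 := by
    intro y hy
    by_contra h
    push_neg at h
    have hs : (∑ i, (y i - 1) * g i) + G = a := by
      rw [hGdef, ← Finset.sum_add_distrib, ← hy]
      apply Finset.sum_congr rfl
      intro i _
      have h1 : y i - 1 + 1 = y i := Nat.succ_pred_eq_of_pos (Nat.pos_of_ne_zero (h i))
      calc (y i - 1) * g i + g i = (y i - 1 + 1) * g i := by ring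
        _ = y i * g i := by rw [h1]
    set s := ∑ i, (y i - 1) * g i with hsdef
    obtain ⟨t, ht⟩ := hdvd
    have ht1 : 1 ≤ t := by
      rcases Nat.eq_zero_or_pos t with h0 | h0
      · rw [h0, Nat.mul_zero] at ht; omega
      · exact h0
    have hsn : s + n = G * (t - 1) := by
      have h2 : G * (t - 1) + G = G * t := by
        calc G * (t - 1) + G = G * (t - 1 + 1) := by ring
          _ = G * t := by congr 1; omega
      omega
    have hmod : (s + n) % G = 0 := by rw [hsn]; exact Nat.mul_mod_right G (t - 1)
    have := hamin s ⟨_, rfl⟩ hmod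
    omega
  obtain ⟨y, hy⟩ := haS
  have hy' : ∑ i, y i * g i = a := hy
  obtain ⟨i₀, hi₀⟩ := hno y hy'
  -- every coordinate of y is < G
  have hbd : ∀ i, y i < G := by
    intro i
    by_contra hcon
    push_neg at hcon
    set y' : Fin k → ℕ := fun j => if j = i then y i + g i - G else y j + g i with hy'def
    have hfact : ∑ j, y' j * g j = a := by
      have key : ∑ j, y' j * g j + G * g i = ∑ j, (y j + g i) * g j := by
        rw [← Finset.add_sum_erase _ (fun j => y' j * g j) (Finset.mem_univ i),
            ← Finset.add_sum_erase _ (fun j => (y j + g i) * g j) (Finset.mem_univ i)]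
        have e1 : y' i * g i + G * g i = (y i + g i) * g i := by
          have : y' i = y i + g i - G := by simp [hy'def]
          rw [this, ← Nat.add_mul]
          congr 1
          omega
        have e2 : ∑ j ∈ Finset.univ.erase i, y' j * g j
            = ∑ j ∈ Finset.univ.erase i, (y j + g i) * g j := by
          apply Finset.sum_congr rfl
          intro j hj
          have hji : j ≠ i := Finset.ne_of_mem_erase hj
          simp [hy'def, hji]
        omega
      have rhs : ∑ j, (y j + g i) * g j = a + g i * G := by
        rw [hGdef, Finset.mul_sum, ← hy', ← Finset.sum_add_distrib]
        apply Finset.sum_congr rfl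
        intro j _
        ring
      rw [rhs] at key
      have : G * g i = g i * G := Nat.mul_comm _ _
      omega
    obtain ⟨j, hj⟩ := hno y' hfact
    have : 0 < y' j := by
      by_cases hji : j = i
      · simp only [hy'def, hji, if_pos rfl]
        have := hpos i
        omega
      · simp only [hy'def, if_neg hji]
        have := hpos i
        omega
    omega
  constructor
  · -- membership
    refine ⟨fun i => M - y i, ?_, ?_⟩
    · show ∑ i, (M - y i) * g i = n
      have hsum : ∑ i, (M - y i) * g i + ∑ i, y i * g i = ∑ i, M * g i := by
        rw [← Finset.sum_add_distrib]
        apply Finset.sum_congr rfl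
        intro i _
        rw [← Nat.add_mul, Nat.sub_add_cancel (le_of_lt (lt_trans (hbd i) hMgtG))]
      rw [hy', ← Finset.mul_sum, ← hGdef, hMG] at hsum
      omega
    · apply le_antisymm
      · have h2 := Finset.le_sup (f := fun i => M - y i) (Finset.mem_univ i₀)
        simp only [hi₀, Nat.sub_zero] at h2
        exact h2
      · exact Finset.sup_le fun i _ => Nat.sub_le M (y i)
  · -- lower bound
    rintro m ⟨z, hz, rfl⟩
    set m' := Finset.univ.sup z with hm'def
    have hle : ∀ i, z i ≤ m' := fun i => Finset.le_sup (Finset.mem_univ i)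
    have hsum : ∑ i, (m' - z i) * g i + ∑ i, z i * g i = ∑ i, m' * g i := by
      rw [← Finset.sum_add_distrib]
      apply Finset.sum_congr rfl
      intro i _
      rw [← Nat.add_mul, Nat.sub_add_cancel (hle i)]
    have hzn : ∑ i, z i * g i = n := hz
    rw [hzn, ← Finset.mul_sum, ← hGdef] at hsum
    have hmod : ((∑ i, (m' - z i) * g i) + n) % G = 0 := by
      rw [hsum]
      exact Nat.mul_mod_left m' G
    have hles := hamin _ ⟨_, rfl⟩ hmod
    have h1 : M * G ≤ m' * G := by omega
    exact Nat.le_of_mul_le_mul_right h1 hG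
end

section
/- Let S be a numerical semigroup generated by g_1, ..., g_k and g = g_1 + ... + g_k. For all n in S with n > g^2, the minimum infinity-length of factorizations satisfies ℓ_∞^m(n) = ℓ_∞^m(n - g) + 1. -/
open Finset in
lemma posify {k : ℕ} (g : Fin k → ℕ) (hpos : ∀ i, 0 < g i) (n m : ℕ)
    (hbig : n > (∑ i, g i) ^ 2) :
    ∀ t (z : Fin k → ℕ), (univ.filter fun j => z j = 0).card ≤ t →
      ∑ i, z i * g i = n → univ.sup z ≤ m →
      ∃ w : Fin k → ℕ, ∑ i, w i * g i = n ∧ (∀ i, 0 < w i) ∧ univ.sup w ≤ m := by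
  intro t
  induction t with
  | zero =>
    intro z hc hsum hsup
    refine ⟨z, hsum, fun i => Nat.pos_of_ne_zero fun h => ?_, hsup⟩
    have : i ∈ univ.filter fun j => z j = 0 := by simp [h]
    have := Finset.card_pos.mpr ⟨i, this⟩
    omega
  | succ t ih =>
    intro z hc hsum hsup
    by_cases hz : ∀ i, 0 < z i
    · exact ⟨z, hsum, hz, hsup⟩
    push_neg at hz
    obtain ⟨j, hj⟩ := hz
    have hj : z j = 0 := Nat.le_zero.mp hj
    have hex : ∃ i₀, (∑ i, g i) < z i₀ := by
      by_contra h
      push_neg at h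
      have : n ≤ (∑ i, g i) ^ 2 := by
        calc n = ∑ i, z i * g i := hsum.symm
          _ ≤ ∑ i, (∑ i, g i) * g i :=
            Finset.sum_le_sum fun i _ => Nat.mul_le_mul_right _ (h i)
          _ = (∑ i, g i) ^ 2 := by rw [← Finset.mul_sum, sq]
      omega
    obtain ⟨i₀, hi₀⟩ := hex
    have hgj : g j ≤ ∑ i, g i := Finset.single_le_sum (fun i _ => Nat.zero_le _) (mem_univ j)
    have hgi₀ : g i₀ ≤ ∑ i, g i := Finset.single_le_sum (fun i _ => Nat.zero_le _) (mem_univ i₀)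
    have hji : j ≠ i₀ := by intro h; rw [h] at hj; omega
    set z' : Fin k → ℕ := fun i => if i = j then g i₀ else if i = i₀ then z i₀ - g j else z i
      with hz'
    have hz'j : z' j = g i₀ := by simp [hz']
    have hz'i₀ : z' i₀ = z i₀ - g j := by simp [hz', Ne.symm hji]
    have hle : ∀ i, z i ≤ m := fun i => le_trans (Finset.le_sup (mem_univ i)) hsup
    apply ih z'
    · have hsub : (univ.filter fun i => z' i = 0) ⊆ (univ.filter fun i => z i = 0).erase j := by
        intro i hi
        simp only [mem_filter, mem_univ, true_and] at hi
        rcases eq_or_ne i j with rfl | hij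
        · rw [hz'j] at hi; exact absurd hi (by have := hpos i₀; omega)
        rcases eq_or_ne i i₀ with rfl | hii
        · rw [hz'i₀] at hi; omega
        · simp only [hz', hij, hii, if_neg, if_false] at hi
          simp [hij, hi]
      have hjmem : j ∈ univ.filter fun i => z i = 0 := by simp [hj]
      have := Finset.card_le_card hsub
      rw [Finset.card_erase_of_mem hjmem] at this
      omega
    · have h1 : ∀ f : Fin k → ℕ, ∑ i, f i * g i =
          f j * g j + (f i₀ * g i₀ + ∑ i ∈ (univ.erase j).erase i₀, f i * g i) := by
        intro f
        rw [← Finset.add_sum_erase _ (fun i => f i * g i) (mem_univ j),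
          ← Finset.add_sum_erase _ (fun i => f i * g i)
            (mem_erase.mpr ⟨Ne.symm hji, mem_univ i₀⟩)]
      have hR : ∑ i ∈ (univ.erase j).erase i₀, z' i * g i
          = ∑ i ∈ (univ.erase j).erase i₀, z i * g i := by
        refine Finset.sum_congr rfl fun i hi => ?_
        simp only [Finset.mem_erase] at hi
        simp [hz', hi.1, hi.2.1]
      rw [h1 z, hj] at hsum
      rw [h1 z', hz'j, hz'i₀, hR, mul_comm (g i₀) (g j)]
      have key : (z i₀ - g j) * g i₀ + g j * g i₀ = z i₀ * g i₀ := by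
        rw [← add_mul, Nat.sub_add_cancel (le_trans hgj (le_of_lt hi₀))]
      omega
    · refine Finset.sup_le fun i _ => ?_
      rcases eq_or_ne i j with rfl | hij
      · rw [hz'j]; have := hle i₀; omega
      rcases eq_or_ne i i₀ with rfl | hii
      · rw [hz'i₀]; have := hle i; omega
      · simp only [hz', hij, hii, if_false]; exact hle i

theorem stmt6 {k : ℕ} (g : Fin k → ℕ) (hpos : ∀ i, 0 < g i)
    (n : ℕ) (hn : ∃ z, IsFactorization g n z) (hbig : n > (∑ i, g i) ^ 2)
    (L : ℕ)
    (hL : IsLeast {m | ∃ z, IsFactorization g (n - ∑ i, g i) z ∧ m = Finset.univ.sup z} L) :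
    IsLeast {m | ∃ z, IsFactorization g n z ∧ m = Finset.univ.sup z} (L + 1) := by
  obtain ⟨z0, hz0⟩ := hn
  have hk : 0 < k := by
    rcases Nat.eq_zero_or_pos k with rfl | hk
    · simp [IsFactorization] at hz0 hbig; omega
    · exact hk
  have hGpos : 0 < ∑ i, g i := by
    have : g ⟨0, hk⟩ ≤ ∑ i, g i :=
      Finset.single_le_sum (fun i _ => Nat.zero_le _) (Finset.mem_univ _)
    have := hpos ⟨0, hk⟩
    omega
  have hG : (∑ i, g i) ≤ n := by nlinarith [hbig]
  constructor
  · -- membership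
    obtain ⟨w, hw, hwsup⟩ := hL.1
    refine ⟨fun i => w i + 1, ?_, ?_⟩
    · show ∑ i, (w i + 1) * g i = n
      have : ∑ i, (w i + 1) * g i = (∑ i, w i * g i) + ∑ i, g i := by
        rw [← Finset.sum_add_distrib]
        exact Finset.sum_congr rfl fun i _ => by ring
      rw [this, hw]
      omega
    · have hne : (Finset.univ : Finset (Fin k)).Nonempty := ⟨⟨0, hk⟩, Finset.mem_univ _⟩
      obtain ⟨i, _, hi⟩ := Finset.exists_mem_eq_sup Finset.univ hne w
      refine le_antisymm ?_ ?_
      · rw [hwsup, hi]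
        exact Finset.le_sup (f := fun i => w i + 1) (Finset.mem_univ i)
      · refine Finset.sup_le fun i' _ => ?_
        show w i' + 1 ≤ L + 1
        have : w i' ≤ L := hwsup ▸ Finset.le_sup (Finset.mem_univ i')
        omega
  · -- lower bound
    rintro m ⟨z, hzf, rfl⟩
    obtain ⟨w, hwsum, hwpos, hwsup⟩ :=
      posify g hpos n (Finset.univ.sup z) hbig _ z le_rfl hzf le_rfl
    have hm1 : 1 ≤ Finset.univ.sup z := by
      have := hwpos ⟨0, hk⟩
      have := Finset.le_sup (f := w) (Finset.mem_univ (⟨0, hk⟩ : Fin k))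
      omega
    have hv : IsFactorization g (n - ∑ i, g i) fun i => w i - 1 := by
      show ∑ i, (w i - 1) * g i = n - ∑ i, g i
      have : ∑ i, (w i - 1) * g i + ∑ i, g i = ∑ i, w i * g i := by
        rw [← Finset.sum_add_distrib]
        refine Finset.sum_congr rfl fun i _ => ?_
        obtain ⟨v, hv⟩ := Nat.exists_eq_succ_of_ne_zero (Nat.pos_iff_ne_zero.mp (hwpos i))
        rw [hv]
        simp [Nat.succ_sub_one, Nat.succ_mul]
      omega
    have hle : L ≤ Finset.univ.sup fun i => w i - 1 := hL.2 ⟨_, hv, rfl⟩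
    have : (Finset.univ.sup fun i => w i - 1) ≤ Finset.univ.sup z - 1 := by
      refine Finset.sup_le fun i _ => ?_
      have h1 := hwpos i
      have h2 : w i ≤ Finset.univ.sup z := le_trans (Finset.le_sup (Finset.mem_univ i)) hwsup
      show w i - 1 ≤ Finset.univ.sup z - 1
      omega
    omega
end

section
/- Fix positive integers g_1, ..., g_k and let N = g_1^2 + ... + g_k^2. Fix n ≥ 0. If z in Z^k minimizes z_1^2 + ... + z_k^2 among all integer solutions of x_1 g_1 + ... + x_k g_k = n, then z + (g_1, ..., g_k) minimizes the same quantity among all integer solutions of x_1 g_1 + ... + x_k g_k = n + N. -/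
/-- The squared 2-norm of an integer tuple. -/
def ellTwo {k : ℕ} (z : Fin k → ℤ) : ℤ := ∑ i, (z i) ^ 2

lemma sum_add_sq {k : ℕ} (a b : Fin k → ℤ) :
    ∑ i, (a i + b i) ^ 2 =
      (∑ i, (a i) ^ 2) + 2 * (∑ i, a i * b i) + ∑ i, (b i) ^ 2 := by
  rw [Finset.mul_sum, ← Finset.sum_add_distrib, ← Finset.sum_add_distrib]
  exact Finset.sum_congr rfl fun i _ => by ring

theorem stmt7 {k : ℕ} (g : Fin k → ℤ) (hpos : ∀ i, 0 < g i)
    (n : ℤ) (hn : 0 ≤ n) (z : Fin k → ℤ)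
    (hz : ∑ i, z i * g i = n)
    (hmin : ∀ x : Fin k → ℤ, ∑ i, x i * g i = n → ellTwo z ≤ ellTwo x) :
    (∑ i, (z i + g i) * g i = n + ∑ i, (g i) ^ 2) ∧
      ∀ x : Fin k → ℤ, ∑ i, x i * g i = n + ∑ i, (g i) ^ 2 →
        ellTwo (fun i => z i + g i) ≤ ellTwo x := by
  constructor
  · have : ∑ i, (z i + g i) * g i = (∑ i, z i * g i) + ∑ i, (g i) ^ 2 := by
      rw [← Finset.sum_add_distrib]
      exact Finset.sum_congr rfl fun i _ => by ring
    rw [this, hz]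
  · intro x hx
    set y : Fin k → ℤ := fun i => x i - g i with hy
    have hysum : ∑ i, y i * g i = n := by
      have : ∑ i, y i * g i = (∑ i, x i * g i) - ∑ i, (g i) ^ 2 := by
        rw [← Finset.sum_sub_distrib]
        exact Finset.sum_congr rfl fun i _ => by ring
      rw [this, hx]; ring
    have h1 := hmin y hysum
    have h2 : ellTwo (fun i => z i + g i) =
        ellTwo z + 2 * n + ∑ i, (g i) ^ 2 := by
      unfold ellTwo
      rw [sum_add_sq z g, hz]
    have h3 : ellTwo x = ellTwo y + 2 * n + ∑ i, (g i) ^ 2 := by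
      have : (fun i => x i) = fun i => y i + g i := by
        funext i; simp [hy]
      unfold ellTwo
      calc ∑ i, (x i) ^ 2 = ∑ i, (y i + g i) ^ 2 := by
            exact Finset.sum_congr rfl fun i _ => by simp [hy]
        _ = (∑ i, (y i) ^ 2) + 2 * (∑ i, y i * g i) + ∑ i, (g i) ^ 2 :=
            sum_add_sq y g
        _ = (∑ i, (y i) ^ 2) + 2 * n + ∑ i, (g i) ^ 2 := by rw [hysum]
    rw [h2, h3]
    unfold ellTwo at h1 ⊢
    linarith
end

section
/- An element u = 2^a · 5^b · 7^c of the arithmetical congruence monoid M_{4,6} = {1} ∪ {n ≡ 4 mod 6} is irreducible in M_{4,6} (i.e., u > 1 and u cannot be written as a product of two elements of M_{4,6} both greater than 1) if and only if either (a = 2 and b = 0) or (a = 1 and b is odd). -/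
/-- The arithmetical congruence monoid `M_{4,6}` as a subset of `ℕ`. -/
def M46 : Set ℕ := {n | n = 1 ∨ (1 ≤ n ∧ n % 6 = 4)}

/-- An atom (irreducible element) of `M_{4,6}`. -/
def IsAtom46 (u : ℕ) : Prop :=
  u ∈ M46 ∧ 1 < u ∧ ∀ v w, v ∈ M46 → w ∈ M46 → u = v * w → v = 1 ∨ w = 1

lemma two_pow_mod3 (k : ℕ) : 2 ^ k % 3 = if k % 2 = 0 then 1 else 2 := by
  induction k with
  | zero => simp
  | succ n ih =>
    rw [pow_succ, Nat.mul_mod, ih]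
    by_cases h : n % 2 = 0
    · rw [if_pos h, if_neg (by omega)]
    · rw [if_neg h, if_pos (by omega)]

lemma prod_mod3 (a b c : ℕ) :
    (2 ^ a * 5 ^ b * 7 ^ c) % 3 = if (a + b) % 2 = 0 then 1 else 2 := by
  have h5 : 5 ^ b % 3 = 2 ^ b % 3 := by rw [Nat.pow_mod]
  have h7 : 7 ^ c % 3 = 1 := by rw [Nat.pow_mod]; norm_num
  calc (2 ^ a * 5 ^ b * 7 ^ c) % 3
      = ((2 ^ a * 5 ^ b) % 3) * (7 ^ c % 3) % 3 := Nat.mul_mod _ _ _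
    _ = ((2 ^ a % 3) * (5 ^ b % 3) % 3) * 1 % 3 := by rw [Nat.mul_mod 
        (2 ^ a), h7]
    _ = ((2 ^ a % 3) * (2 ^ b % 3) % 3) := by rw [h5]; simp
    _ = (2 ^ a * 2 ^ b) % 3 := by rw [← Nat.mul_mod]
    _ = 2 ^ (a + b) % 3 := by rw [pow_add]
    _ = _ := two_pow_mod3 _

lemma mem_M46_of (a b c : ℕ) (ha : 1 ≤ a) (hab : (a + b) % 2 = 0) :
    2 ^ a * 5 ^ b * 7 ^ c ∈ M46 := by
  right
  have h2 : 2 ∣ 2 ^ a * 5 ^ b * 7 ^ c :=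
    Dvd.dvd.mul_right (Dvd.dvd.mul_right (dvd_pow_self 2 (by omega)) _) _
  have h3 := prod_mod3 a b c
  rw [if_pos hab] at h3
  obtain ⟨m, hm⟩ := h2
  have hpos : 0 < 2 ^ a * 5 ^ b * 7 ^ c := by positivity
  constructor
  · omega
  · omega

lemma seven_pow_mod3 (k : ℕ) : 7 ^ k % 3 = 1 := by
  rw [Nat.pow_mod]; norm_num

theorem stmt11 (a b c : ℕ) (hu : 2 ^ a * 5 ^ b * 7 ^ c ∈ M46) :
    IsAtom46 (2 ^ a * 5 ^ b * 7 ^ c) ↔ ((a = 2 ∧ b = 0) ∨ (a = 1 ∧ Odd b)) := by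
  have h5pos : (0:ℕ) < 5 ^ b := Nat.pow_pos (by norm_num)
  have h7pos : (0:ℕ) < 7 ^ c := Nat.pow_pos (by norm_num)
  constructor
  · rintro ⟨hmem, hlt, hatom⟩
    rcases hmem with h1 | ⟨-, h6⟩
    · omega
    -- derive a ≥ 1
    have ha : 1 ≤ a := by
      by_contra h
      have ha0 : a = 0 := by omega
      subst ha0
      have : Odd (2 ^ 0 * 5 ^ b * 7 ^ c) := by
        simp only [pow_zero, one_mul]
        exact (Odd.pow (by decide)).mul (Odd.pow (by decide))
      have := Nat.odd_iff.mp this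
      omega
    -- derive (a + b) even
    have h3 := prod_mod3 a b c
    have hab : (a + b) % 2 = 0 := by
      by_contra h
      rw [if_neg h] at h3
      omega
    -- rule out a ≥ 3
    have hale : a ≤ 2 := by
      by_contra h
      push_neg at h
      have hw : 2 ^ (a - 2) * 5 ^ b * 7 ^ c ∈ M46 :=
        mem_M46_of _ _ _ (by omega) (by omega)
      have hv : (4 : ℕ) ∈ M46 := Or.inr ⟨by norm_num, by norm_num⟩
      have heq : 2 ^ a * 5 ^ b * 7 ^ c = 4 * (2 ^ (a - 2) * 5 ^ b * 7 ^ c) := by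
        have : (2:ℕ) ^ a = 4 * 2 ^ (a - 2) := by
          rw [show (4:ℕ) = 2 ^ 2 from rfl, ← pow_add]
          congr 1
          omega
        rw [this]; ring
      rcases hatom 4 _ hv hw heq with h4 | hw1
      · omega
      · have : (0:ℕ) < 2 ^ (a - 2) := Nat.pow_pos (by norm_num)
        have h2le : (2:ℕ) ≤ 2 ^ (a - 2) := by
          calc (2:ℕ) = 2 ^ 1 := rfl
          _ ≤ 2 ^ (a - 2) := Nat.pow_le_pow_right (by norm_num) (by omega)
        have := Nat.mul_le_mul (Nat.mul_le_mul h2le h5pos) h7pos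
        omega
    interval_cases a
    · -- a = 1, so b is odd
      right
      exact ⟨rfl, Nat.odd_iff.mpr (by omega)⟩
    · -- a = 2, so b is even; rule out b ≥ 2
      left
      refine ⟨rfl, ?_⟩
      by_contra hb
      have hb2 : 2 ≤ b := by omega
      have hw : 2 ^ 1 * 5 ^ (b - 1) * 7 ^ c ∈ M46 :=
        mem_M46_of _ _ _ le_rfl (by omega)
      have hv : (10 : ℕ) ∈ M46 := Or.inr ⟨by norm_num, by norm_num⟩
      have heq : 2 ^ 2 * 5 ^ b * 7 ^ c = 10 * (2 ^ 1 * 5 ^ (b - 1) * 7 ^ c) := by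
        have : (5:ℕ) ^ b = 5 * 5 ^ (b - 1) := by
          rw [← pow_succ']
          congr 1
          omega
        rw [this]; ring
      rcases hatom 10 _ hv hw heq with h10 | hw1
      · omega
      · have h5le : (1:ℕ) ≤ 5 ^ (b - 1) := Nat.one_le_pow _ _ (by norm_num)
        have h2le : (2:ℕ) ≤ 2 ^ 1 := by norm_num
        have := Nat.mul_le_mul (Nat.mul_le_mul h2le h5le) h7pos
        omega
  · rintro (⟨rfl, rfl⟩ | ⟨rfl, hb⟩)
    · -- u = 4 * 7^c
      have hlt : 1 < 2 ^ 2 * 5 ^ 0 * 7 ^ c := by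
        have := Nat.mul_le_mul (Nat.mul_le_mul (le_refl 4) (le_refl 1)) h7pos
        simpa using by omega
      refine ⟨hu, hlt, ?_⟩
      intro v w hv hw heq
      rcases hv with hv1 | ⟨-, hv6⟩
      · exact Or.inl hv1
      rcases hw with hw1 | ⟨-, hw6⟩
      · exact Or.inr hw1
      exfalso
      obtain ⟨v', rfl⟩ : 2 ∣ v := by omega
      obtain ⟨w', rfl⟩ : 2 ∣ w := by omega
      have key : v' * w' = 7 ^ c := by
        have h4 : (4:ℕ) * (v' * w') = 4 * 7 ^ c := by
          calc (4:ℕ) * (v' * w') = 2 * v' * (2 * w') := by ring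
          _ = 2 ^ 2 * 5 ^ 0 * 7 ^ c := heq.symm
          _ = 4 * 7 ^ c := by norm_num
        omega
      have hdvd : v' ∣ 7 ^ c := ⟨w', key.symm⟩
      obtain ⟨k, -, rfl⟩ := (Nat.dvd_prime_pow (by norm_num : Nat.Prime 7)).mp hdvd
      have := seven_pow_mod3 k
      omega
    · -- u = 2 * 5^b * 7^c with b odd
      refine ⟨hu, ?_, ?_⟩
      · have h1 : 1 ≤ 5 ^ b * 7 ^ c := Nat.mul_pos h5pos h7pos
        calc (1:ℕ) < 2 * 1 := by norm_num
        _ ≤ 2 * (5 ^ b * 7 ^ c) := Nat.mul_le_mul_left _ h1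
        _ = 2 ^ 1 * 5 ^ b * 7 ^ c := by ring
      intro v w hv hw heq
      rcases hv with hv1 | ⟨-, hv6⟩
      · exact Or.inl hv1
      rcases hw with hw1 | ⟨-, hw6⟩
      · exact Or.inr hw1
      exfalso
      obtain ⟨v', rfl⟩ : 2 ∣ v := by omega
      obtain ⟨w', rfl⟩ : 2 ∣ w := by omega
      have hodd : (5 ^ b * 7 ^ c) % 2 = 1 :=
        Nat.odd_iff.mp ((Odd.pow (by decide)).mul (Odd.pow (by decide)))
      have h4 : 2 * (5 ^ b * 7 ^ c) = 4 * (v' * w') := by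
        calc 2 * (5 ^ b * 7 ^ c) = 2 ^ 1 * 5 ^ b * 7 ^ c := by ring
        _ = 2 * v' * (2 * w') := heq
        _ = 4 * (v' * w') := by ring
      omega
end

section
/- In the arithmetical congruence monoid M_{6,6} = {1} ∪ {n ≥ 1 : n ≡ 0 (mod 6)}, every element that is a product of two or more atoms can be written as a product of exactly two atoms; consequently the minimum factorization length of every reducible element of M_{6,6} is 2. -/
/-- The arithmetical congruence monoid `M_{6,6}` as a subset of `ℕ`. -/
def M66 : Set ℕ := {n | n = 1 ∨ (1 ≤ n ∧ n % 6 = 0)}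

/-- An atom (irreducible element) of `M_{6,6}`. -/
def IsAtom66 (u : ℕ) : Prop :=
  u ∈ M66 ∧ 1 < u ∧ ∀ v w, v ∈ M66 → w ∈ M66 → u = v * w → v = 1 ∨ w = 1

lemma atom_dvd6 {u : ℕ} (h : IsAtom66 u) : 6 ∣ u := by
  obtain ⟨hm, hu, _⟩ := h
  rcases hm with h1 | ⟨_, h6⟩
  · omega
  · omega

lemma atom_not36 {u : ℕ} (h : IsAtom66 u) : ¬ (36 ∣ u) := by
  rintro ⟨k, hk⟩
  obtain ⟨hm, hu, hirr⟩ := h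
  have hk0 : 0 < k := by omega
  have := hirr 6 (6 * k) (Or.inr ⟨by norm_num, by norm_num⟩)
    (Or.inr ⟨by omega, by omega⟩) (by omega)
  omega

lemma mk_atom {u : ℕ} (h6 : 6 ∣ u) (h0 : 0 < u) (h36 : ¬ 36 ∣ u) : IsAtom66 u := by
  refine ⟨Or.inr ⟨h0, by omega⟩, by omega, ?_⟩
  intro v w hv hw huvw
  by_contra hcon
  push_neg at hcon
  obtain ⟨hv1, hw1⟩ := hcon
  have h6v : 6 ∣ v := by rcases hv with h | ⟨_, h⟩ <;> omega
  have h6w : 6 ∣ w := by rcases hw with h | ⟨_, h⟩ <;> omega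
  exact h36 (huvw ▸ Nat.mul_dvd_mul h6v h6w)

theorem stmt12 (x : ℕ) (L : List ℕ) (hL : ∀ u ∈ L, IsAtom66 u)
    (hlen : 2 ≤ L.length) (hprod : L.prod = x) :
    (∃ u v, IsAtom66 u ∧ IsAtom66 v ∧ x = u * v) ∧
      IsLeast {m | ∃ L' : List ℕ, (∀ u ∈ L', IsAtom66 u) ∧ L'.prod = x ∧ m = L'.length}
        2 := by
  -- x is positive
  have hx0 : 0 < x := by
    subst hprod
    apply List.prod_pos
    intro a ha
    exact lt_trans one_pos (hL a ha).2.1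
  -- 36 divides x
  have h36x : (36 : ℕ) ∣ x := by
    obtain ⟨a, b, t, rfl⟩ : ∃ a b t, L = a :: b :: t := by
      match L, hlen with
      | a :: b :: t, _ => exact ⟨a, b, t, rfl⟩
    obtain ⟨p, hp⟩ := atom_dvd6 (hL a (by simp))
    obtain ⟨q, hq⟩ := atom_dvd6 (hL b (by simp))
    refine ⟨p * q * t.prod, ?_⟩
    simp only [List.prod_cons] at hprod
    rw [← hprod, hp, hq]; ring
  obtain ⟨N, hN⟩ := h36x
  have hN0 : N ≠ 0 := by omega
  -- split off the 2-part of N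
  set a := 2 ^ N.factorization 2 with ha
  set b := N / a with hb
  have hab : a * b = N := Nat.ordProj_mul_ordCompl_eq_self N 2
  have h2b : ¬ 2 ∣ b := Nat.not_dvd_ordCompl Nat.prime_two hN0
  have h3a : ¬ 3 ∣ a := fun h =>
    absurd (Nat.Prime.dvd_of_dvd_pow Nat.prime_three h) (by norm_num)
  have ha0 : 0 < a := Nat.pow_pos (by norm_num)
  have hb0 : 0 < b := by
    rcases Nat.eq_zero_or_pos b with h | h
    · exfalso; rw [h, mul_zero] at hab; omega
    · exact h
  have hu : IsAtom66 (6 * a) := by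
    refine mk_atom ⟨a, rfl⟩ (by omega) ?_
    intro h
    have h6a : 6 ∣ a := by
      have : (6 * 6 : ℕ) ∣ 6 * a := by norm_num at h ⊢; omega
      exact (Nat.mul_dvd_mul_iff_left (by norm_num : (0:ℕ) < 6)).mp this
    exact h3a (dvd_trans (by norm_num) h6a)
  have hv : IsAtom66 (6 * b) := by
    refine mk_atom ⟨b, rfl⟩ (by omega) ?_
    intro h
    have h6b : 6 ∣ b := by
      have : (6 * 6 : ℕ) ∣ 6 * b := by norm_num at h ⊢; omega
      exact (Nat.mul_dvd_mul_iff_left (by norm_num : (0:ℕ) < 6)).mp this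
    exact h2b (dvd_trans (by norm_num) h6b)
  have hxuv : x = (6 * a) * (6 * b) := by
    rw [hN, ← hab]; ring
  refine ⟨⟨6 * a, 6 * b, hu, hv, hxuv⟩, ?_, ?_⟩
  · -- 2 is in the set
    refine ⟨[6 * a, 6 * b], ?_, ?_, rfl⟩
    · intro u hu'
      simp only [List.mem_cons, List.not_mem_nil, or_false] at hu'
      rcases hu' with rfl | rfl
      · exact hu
      · exact hv
    · simp [hxuv]
  · -- lower bound
    rintro m ⟨L', hL', hprod', rfl⟩
    by_contra h
    push_neg at h
    interval_cases hLL : L'.length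
    · have : L' = [] := List.length_eq_zero_iff.mp hLL
      rw [this] at hprod'
      simp at hprod'
      omega
    · obtain ⟨c, rfl⟩ := List.length_eq_one_iff.mp hLL
      simp at hprod'
      exact atom_not36 (hL' c (by simp)) (hprod' ▸ ⟨N, hN⟩)
end

section
/- Let x = 28 = 2^2 · 7 in the arithmetical congruence monoid M_{4,6}, and let T_k = k(k+1)/2 denote the k-th triangular number. For every k ≥ 2 and every n with T_k ≤ n < T_{k+1}, the maximum number of distinct atoms appearing in a factorization of x^n in M_{4,6} equals k + 1. In particular, ℓ_0^M(28^n) ∈ Θ(n^{1/2}). -/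
/-- The k-th triangular number. -/
def T (k : ℕ) : ℕ := k * (k + 1) / 2

lemma pow7_mod6 (e : ℕ) : 7 ^ e % 6 = 1 := by
  rw [Nat.pow_mod]; norm_num

lemma mem46_pow (e : ℕ) : 4 * 7 ^ e ∈ M46 := by
  refine Or.inr ⟨Nat.one_le_iff_ne_zero.mpr (by positivity), ?_⟩
  rw [Nat.mul_mod, pow7_mod6]

lemma atom_pow (e : ℕ) : IsAtom46 (4 * 7 ^ e) := by
  have h7 : 1 ≤ 7 ^ e := Nat.one_le_pow _ _ (by norm_num)
  refine ⟨mem46_pow e, by nlinarith, ?_⟩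
  intro v w hv hw huvw
  by_contra hc
  push_neg at hc
  obtain ⟨hv1, hw1⟩ := hc
  have hv4 : v % 6 = 4 := by
    rcases hv with h | h
    · exact absurd h hv1
    · exact h.2
  have hw4 : w % 6 = 4 := by
    rcases hw with h | h
    · exact absurd h hw1
    · exact h.2
  obtain ⟨v', rfl⟩ : 2 ∣ v := by omega
  obtain ⟨w', rfl⟩ : 2 ∣ w := by omega
  have h77 : v' * w' = 7 ^ e := by nlinarith
  have hv'dvd : v' ∣ 7 ^ e := ⟨w', h77.symm⟩
  obtain ⟨i, _, rfl⟩ := (Nat.dvd_prime_pow (by norm_num : Nat.Prime 7)).mp hv'dvd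
  rw [Nat.mul_mod, pow7_mod6] at hv4
  norm_num at hv4

lemma atom_dvd_pow {u n : ℕ} (hu : IsAtom46 u) (hd : u ∣ 28 ^ n) : ∃ e, u = 4 * 7 ^ e := by
  obtain ⟨hmem, h1, hirr⟩ := hu
  have h28 : (28 : ℕ) ^ n = 2 ^ (2 * n) * 7 ^ n := by
    rw [show (28 : ℕ) = 2 ^ 2 * 7 by norm_num, mul_pow, ← pow_mul]
  rw [h28, Nat.dvd_mul] at hd
  obtain ⟨a, b, ha, hb, hab⟩ := hd
  obtain ⟨i, _, rfl⟩ := (Nat.dvd_prime_pow Nat.prime_two).mp ha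
  obtain ⟨j, _, rfl⟩ := (Nat.dvd_prime_pow (by norm_num : Nat.Prime 7)).mp hb
  subst hab
  have h6 : 2 ^ i * 7 ^ j % 6 = 4 := by
    rcases hmem with h | h
    · omega
    · exact h.2
  -- i is positive
  have hipos : 1 ≤ i := by
    by_contra hi
    have : i = 0 := by omega
    subst this
    have : 7 ^ j % 2 = 1 := by rw [Nat.pow_mod]; norm_num
    simp at h6
    omega
  -- i is even
  rcases Nat.even_or_odd i with he | ho
  · obtain ⟨b, rfl⟩ := he
    have h4 : (2 : ℕ) ^ (b + b) = 4 ^ b := by rw [pow_add, ← mul_pow]; norm_num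
    rw [h4] at h6 hirr ⊢
    match b, hipos with
    | 1, _ => exact ⟨j, by norm_num⟩
    | (c + 2), _ =>
      exfalso
      have hsplit : 4 ^ (c + 2) * 7 ^ j = 4 * (4 * (4 ^ c * 7 ^ j)) := by ring
      have hmem2 : 4 * (4 ^ c * 7 ^ j) ∈ M46 := by
        have h4c : (4 : ℕ) * (4 ^ c * 7 ^ j) % 3 = 1 := by
          simp [Nat.mul_mod, Nat.pow_mod]
        refine Or.inr ⟨Nat.one_le_iff_ne_zero.mpr (by positivity), ?_⟩
        omega
      have h4m : (4 : ℕ) ∈ M46 := Or.inr (by norm_num)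
      rcases hirr 4 (4 * (4 ^ c * 7 ^ j)) h4m hmem2 hsplit with h | h
      · norm_num at h
      · have h1' : 1 ≤ (4 : ℕ) ^ c * 7 ^ j :=
          Nat.one_le_iff_ne_zero.mpr (by positivity)
        omega
  · exfalso
    obtain ⟨b, rfl⟩ := ho
    have h4 : (2 : ℕ) ^ (2 * b + 1) * 7 ^ j % 3 = 2 := by
      have h2b : (2 : ℕ) ^ (2 * b + 1) = 4 ^ b * 2 := by
        rw [pow_succ, pow_mul]; norm_num
      rw [h2b]
      simp [Nat.mul_mod, Nat.pow_mod]
    omega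

lemma prod_map_eq (E : List ℕ) :
    (E.map (fun e => 4 * 7 ^ e)).prod = 4 ^ E.length * 7 ^ E.sum := by
  induction E with
  | nil => simp
  | cons a E ih => simp [ih, pow_add, pow_succ]; ring

lemma len_sum_eq {l s n : ℕ} (h : 4 ^ l * 7 ^ s = 28 ^ n) : l = n ∧ s = n := by
  have h2 : (2 : ℕ) ^ (2 * l) * 7 ^ s = 2 ^ (2 * n) * 7 ^ n := by
    have h28 : (28 : ℕ) ^ n = 2 ^ (2 * n) * 7 ^ n := by
      rw [show (28 : ℕ) = 2 ^ 2 * 7 by norm_num, mul_pow, ← pow_mul]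
    rw [← h28, ← h, pow_mul]
    norm_num
  have e2 := congrArg (fun f => f 2) (congrArg Nat.factorization h2)
  have e7 := congrArg (fun f => f 7) (congrArg Nat.factorization h2)
  simp [Nat.factorization_mul, pow_ne_zero, Nat.Prime.factorization_pow,
    (by norm_num : Nat.Prime 2), (by norm_num : Nat.Prime 7), Finsupp.single_apply] at e2 e7
  omega

lemma toFinset_sum_le (E : List ℕ) : ∑ i ∈ E.toFinset, i ≤ E.sum := by
  induction E with
  | nil => simp
  | cons a E ih =>
    simp only [List.toFinset_cons, List.sum_cons]
    by_cases h : a ∈ E.toFinset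
    · rw [Finset.insert_eq_self.mpr h]; omega
    · rw [Finset.sum_insert h]; omega

lemma range_sum_le (S : Finset ℕ) : ∑ i ∈ Finset.range S.card, i ≤ ∑ i ∈ S, i := by
  induction S using Finset.induction_on_max with
  | empty => simp
  | insert a S ha ih =>
    have hS : S ⊆ Finset.range a := fun x hx => Finset.mem_range.mpr (ha x hx)
    have hcard : S.card ≤ a := by
      calc S.card ≤ (Finset.range a).card := Finset.card_le_card hS
        _ = a := Finset.card_range a
    have hna : a ∉ S := fun h => lt_irrefl a (ha a h)
    rw [Finset.card_insert_of_notMem hna, Finset.sum_insert hna, Finset.sum_range_succ]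
    omega

lemma list_range_sum (k : ℕ) : (List.range k).sum * 2 = k * (k - 1) := by
  induction k with
  | zero => simp
  | succ m ih =>
    rw [List.range_succ]
    simp only [List.sum_append, List.sum_cons, List.sum_nil, Nat.add_sub_cancel]
    cases m with
    | zero => simp
    | succ p =>
      simp only [Nat.succ_sub_one] at ih
      nlinarith [ih]

lemma list_range_toFinset (k : ℕ) : (List.range k).toFinset = Finset.range k := by
  ext x
  simp

lemma f_inj : Function.Injective (fun e : ℕ => 4 * 7 ^ e) := by
  intro a b h
  simp only at h
  have h7 : (7 : ℕ) ^ a = 7 ^ b := by omega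
  exact Nat.pow_right_injective (by norm_num) h7

theorem stmt14 (k : ℕ) (hk : 2 ≤ k) (n : ℕ) (h1 : T k ≤ n) (h2 : n < T (k + 1)) :
    IsGreatest {m | ∃ L : List ℕ, (∀ u ∈ L, IsAtom46 u) ∧ L.prod = 28 ^ n ∧
      m = L.toFinset.card} (k + 1) := by
  have hTk : 2 * T k = k * (k + 1) := by
    have he : 2 ∣ k * (k + 1) := (Nat.even_mul_succ_self k).two_dvd
    unfold T
    omega
  have hTk1 : 2 * T (k + 1) = (k + 1) * (k + 2) := by
    have he : 2 ∣ (k + 1) * (k + 1 + 1) := (Nat.even_mul_succ_self (k + 1)).two_dvd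
    unfold T
    rw [show (k + 1) * (k + 2) = (k + 1) * (k + 1 + 1) from by ring]
    omega
  have hk1n : k + 1 ≤ n := by nlinarith
  set r := n - T k with hr
  constructor
  · -- membership: construct the factorization
    set E₀ : List ℕ := (k + r) :: (List.range k ++ List.replicate (n - (k + 1)) 0) with hE₀
    refine ⟨E₀.map (fun e => 4 * 7 ^ e), ?_, ?_, ?_⟩
    · intro u hu
      obtain ⟨e, _, rfl⟩ := List.mem_map.mp hu
      exact atom_pow e
    · rw [prod_map_eq]
      have hlen : E₀.length = n := by
        rw [hE₀]
        simp only [List.length_cons, List.length_append, List.length_range,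
          List.length_replicate]
        omega
      have hrange2 := list_range_sum k
      have hsum : E₀.sum = n := by
        rw [hE₀]
        simp only [List.sum_cons, List.sum_append, List.sum_replicate, smul_eq_mul,
          mul_zero, add_zero]
        have hkk : k * (k + 1) = k * (k - 1) + 2 * k := by
          cases k with
          | zero => simp
          | succ m => simp only [Nat.succ_sub_one]; ring
        omega
      rw [hlen, hsum, ← mul_pow]
      norm_num
    · have htf : (E₀.map (fun e => 4 * 7 ^ e)).toFinset
          = E₀.toFinset.image (fun e => 4 * 7 ^ e) := by
        ext x
        simp [List.mem_map]
      rw [htf, Finset.card_image_of_injective _ f_inj]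
      have hrep : (List.replicate (n - (k + 1)) 0).toFinset ⊆ Finset.range k := by
        intro x hx
        rw [List.mem_toFinset, List.mem_replicate] at hx
        rw [Finset.mem_range]
        omega
      have hE₀t : E₀.toFinset = insert (k + r) (Finset.range k) := by
        rw [hE₀, List.toFinset_cons, List.toFinset_append, list_range_toFinset,
          Finset.union_eq_left.mpr hrep]
      rw [hE₀t, Finset.card_insert_of_notMem (by simp), Finset.card_range]
  · -- upper bound
    rintro m ⟨L, hatoms, hprod, hcard⟩
    have hrep : ∀ u ∈ L, ∃ e, u = 4 * 7 ^ e := by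
      intro u hu
      exact atom_dvd_pow (hatoms u hu) (hprod ▸ List.dvd_prod hu)
    obtain ⟨E, rfl⟩ : ∃ E : List ℕ, L = E.map (fun e => 4 * 7 ^ e) := by
      clear hprod hcard hatoms
      induction L with
      | nil => exact ⟨[], rfl⟩
      | cons u L ih =>
        obtain ⟨E, hE⟩ := ih (fun v hv => hrep v (List.mem_cons_of_mem u hv))
        obtain ⟨e, he⟩ := hrep u List.mem_cons_self
        exact ⟨e :: E, by rw [List.map_cons, ← hE, he]⟩
    rw [prod_map_eq] at hprod
    obtain ⟨hlen, hsum⟩ := len_sum_eq hprod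
    have htf : (E.map (fun e => 4 * 7 ^ e)).toFinset
        = E.toFinset.image (fun e => 4 * 7 ^ e) := by
      ext x
      simp [List.mem_map]
    rw [htf, Finset.card_image_of_injective _ f_inj] at hcard
    set m' := E.toFinset.card with hm'
    have hs1 : ∑ i ∈ Finset.range m', i ≤ n := by
      calc ∑ i ∈ Finset.range m', i ≤ ∑ i ∈ E.toFinset, i := range_sum_le E.toFinset
        _ ≤ E.sum := toFinset_sum_le E
        _ = n := hsum
    have hs2 : (∑ i ∈ Finset.range m', i) * 2 = m' * (m' - 1) := Finset.sum_range_id_mul_two m'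
    subst hcard
    by_contra hcon
    push_neg at hcon
    have hm2 : k + 2 ≤ m' := hcon
    have hge : (k + 1) * (k + 2) ≤ m' * (m' - 1) := by
      calc (k + 1) * (k + 2) = (k + 2) * (k + 1) := mul_comm _ _
        _ ≤ m' * (m' - 1) := Nat.mul_le_mul hm2 (by omega)
    omega
end

section
/- Let x = 40 = 2^3 · 5 in the arithmetical congruence monoid M_{4,6}. For every k ≥ 1 and every n with k^2 ≤ n < (k+1)^2, the maximum number of distinct atoms appearing in a factorization of x^n in M_{4,6} equals k + 1. In particular, ℓ_0^M(40^n) ∈ Θ(n^{1/2}). -/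
lemma pow2_mod3 (m : ℕ) : 2 ^ m % 3 = if m % 2 = 0 then 1 else 2 := by
  induction m with
  | zero => simp
  | succ m ih =>
    rw [pow_succ, Nat.mul_mod, ih]
    rcases Nat.mod_two_eq_zero_or_one m with h | h
    · rw [if_pos h, if_neg (by omega)]
    · rw [if_neg (by omega), if_pos (by omega)]

lemma mod3_of_pows (a b : ℕ) : (2 ^ a * 5 ^ b) % 3 = 2 ^ (a + b) % 3 := by
  rw [Nat.mul_mod, Nat.pow_mod 5, show (5 : ℕ) % 3 = 2 by norm_num,
    ← Nat.mul_mod, ← pow_add]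

lemma mem_M46_mod (a b : ℕ) (ha : 1 ≤ a) (hab : (a + b) % 2 = 0) :
    (2 ^ a * 5 ^ b) % 6 = 4 := by
  have h2 : (2 ^ a * 5 ^ b) % 2 = 0 := by
    have : (2 : ℕ) ∣ 2 ^ a * 5 ^ b := dvd_mul_of_dvd_left (dvd_pow_self 2 (by omega)) _
    omega
  have h3 : (2 ^ a * 5 ^ b) % 3 = 1 := by
    rw [mod3_of_pows, pow2_mod3, if_pos hab]
  omega

lemma mem_M46' (a b : ℕ) (ha : 1 ≤ a) (hab : (a + b) % 2 = 0) :
    (2 ^ a * 5 ^ b) ∈ M46 := by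
  right
  exact ⟨Nat.one_le_iff_ne_zero.mpr (by positivity), mem_M46_mod a b ha hab⟩

lemma pos_of_mem_M46 (v : ℕ) (hv : v ∈ M46) (hv1 : v ≠ 1) : v % 6 = 4 := by
  rcases hv with h | h
  · exact absurd h hv1
  · exact h.2

lemma isAtom46_four : IsAtom46 4 := by
  refine ⟨Or.inr ⟨by norm_num, by norm_num⟩, by norm_num, ?_⟩
  intro v w hv hw h
  by_contra hc
  push_neg at hc
  have hv4 := pos_of_mem_M46 v hv hc.1
  have hw4 := pos_of_mem_M46 w hw hc.2
  have h16 : 16 ≤ v * w := Nat.mul_le_mul (show 4 ≤ v by omega) (show 4 ≤ w by omega)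
  omega

lemma isAtom46_two_five (b : ℕ) (hb : b % 2 = 1) : IsAtom46 (2 * 5 ^ b) := by
  refine ⟨by simpa using mem_M46' 1 b le_rfl (by omega), ?_, ?_⟩
  · have : 1 ≤ 5 ^ b := Nat.one_le_pow _ _ (by norm_num)
    omega
  · intro v w hv hw h
    by_contra hc
    push_neg at hc
    have hv4 := pos_of_mem_M46 v hv hc.1
    have hw4 := pos_of_mem_M46 w hw hc.2
    obtain ⟨v', rfl⟩ : ∃ v', v = 2 * v' := ⟨v / 2, by omega⟩
    obtain ⟨w', rfl⟩ : ∃ w', w = 2 * w' := ⟨w / 2, by omega⟩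
    have h4 : (2 * v') * (2 * w') = 4 * (v' * w') := by ring
    have h5 : 5 ^ b % 2 = 1 := by
      rw [Nat.pow_mod]; simp
    omega

lemma atom_classify (u : ℕ) (hu : IsAtom46 u) (α β : ℕ) (hdvd : u ∣ 2 ^ α * 5 ^ β) :
    u = 4 ∨ ∃ b, b % 2 = 1 ∧ u = 2 * 5 ^ b := by
  obtain ⟨x, y, hx, hy, hxy⟩ := Nat.dvd_mul.mp hdvd
  obtain ⟨a, -, rfl⟩ := (Nat.dvd_prime_pow Nat.prime_two).mp hx
  obtain ⟨b, -, rfl⟩ := (Nat.dvd_prime_pow (by norm_num : Nat.Prime 5)).mp hy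
  subst hxy
  have hmod : (2 ^ a * 5 ^ b) % 6 = 4 :=
    pos_of_mem_M46 _ hu.1 (by have := hu.2.1; omega)
  have hodd5 : 5 ^ b % 2 = 1 := by rw [Nat.pow_mod]; simp
  have ha1 : 1 ≤ a := by
    by_contra hc
    have ha0 : a = 0 := by omega
    subst ha0
    simp only [pow_zero, one_mul] at hmod
    omega
  have hab : (a + b) % 2 = 0 := by
    have h3 : (2 ^ a * 5 ^ b) % 3 = 1 := by omega
    rw [mod3_of_pows, pow2_mod3] at h3
    by_contra hc
    rw [if_neg hc] at h3
    omega
  rcases Nat.lt_or_ge a 3 with ha3 | ha3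
  · -- a = 1 or a = 2
    rcases Nat.lt_or_ge a 2 with ha2 | ha2
    · -- a = 1, b odd
      have : a = 1 := by omega
      subst this
      right
      exact ⟨b, by omega, by ring⟩
    · -- a = 2
      have ha : a = 2 := by omega
      subst ha
      rcases Nat.eq_zero_or_pos b with hb0 | hb1
      · subst hb0; left; norm_num
      · -- b even ≥ 2 : u = 10 * (2*5^(b-1)), contradiction
        exfalso
        have hb2 : b % 2 = 0 := by omega
        have hmem2 : (2 * 5 ^ (b - 1)) ∈ M46 := by
          have := mem_M46' 1 (b - 1) le_rfl (by omega)
          simpa using this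
        have heq : 2 ^ 2 * 5 ^ b = 10 * (2 * 5 ^ (b - 1)) := by
          have : 5 ^ b = 5 * 5 ^ (b - 1) := by
            rw [← pow_succ']; congr 1; omega
          rw [this]; ring
        have h10 : (10 : ℕ) ∈ M46 := Or.inr ⟨by norm_num, by norm_num⟩
        rcases hu.2.2 10 (2 * 5 ^ (b - 1)) h10 hmem2 heq with h | h
        · omega
        · have : 1 ≤ 5 ^ (b - 1) := Nat.one_le_pow _ _ (by norm_num)
          omega
  · -- a ≥ 3 : u = 4 * (2^(a-2) * 5^b)
    exfalso
    have hmem2 : (2 ^ (a - 2) * 5 ^ b) ∈ M46 := mem_M46' (a - 2) b (by omega) (by omega)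
    have heq : 2 ^ a * 5 ^ b = 4 * (2 ^ (a - 2) * 5 ^ b) := by
      have : 2 ^ a = 4 * 2 ^ (a - 2) := by
        have : (2 : ℕ) ^ a = 2 ^ 2 * 2 ^ (a - 2) := by
          rw [← pow_add]; congr 1; omega
        omega
      rw [this]; ring
    have h4 : (4 : ℕ) ∈ M46 := Or.inr ⟨by norm_num, by norm_num⟩
    rcases hu.2.2 4 (2 ^ (a - 2) * 5 ^ b) h4 hmem2 heq with h | h
    · omega
    · have h25 : 2 ≤ 2 ^ (a - 2) := by
        have : 2 ^ 1 ≤ 2 ^ (a - 2) := Nat.pow_le_pow_right (by norm_num) (by omega)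
        simpa using this
      have : 1 ≤ 5 ^ b := Nat.one_le_pow _ _ (by norm_num)
      nlinarith

lemma odd_sum_ge (B : Finset ℕ) (hB : ∀ b ∈ B, b % 2 = 1) : B.card ^ 2 ≤ ∑ b ∈ B, b := by
  induction B using Finset.strongInduction with
  | _ B ih =>
    rcases B.eq_empty_or_nonempty with rfl | hne
    · simp
    · have hM : B.max' hne ∈ B := B.max'_mem hne
      set M := B.max' hne with hMdef
      have hsub : B.erase M ⊂ B := Finset.erase_ssubset hM
      have IH := ih _ hsub (fun b hb => hB b (Finset.mem_of_mem_erase hb))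
      have hsum : ∑ b ∈ B, b = M + ∑ b ∈ B.erase M, b := (Finset.add_sum_erase _ _ hM).symm
      have hcard : (B.erase M).card = B.card - 1 := Finset.card_erase_of_mem hM
      have hMge : 2 * B.card - 1 ≤ M := by
        have hinj : Set.InjOn (fun b => b / 2) B := by
          intro x hx y hy h
          have hx1 := hB x hx
          have hy1 := hB y hy
          simp only at h
          omega
        have himg : B.image (fun b => b / 2) ⊆ Finset.range (M / 2 + 1) := by
          intro x hx
          obtain ⟨b, hb, rfl⟩ := Finset.mem_image.mp hx
          have := B.le_max' b hb
          simp only [Finset.mem_range]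
          omega
        have hcard2 : B.card ≤ M / 2 + 1 := by
          calc B.card = (B.image (fun b => b / 2)).card :=
                (Finset.card_image_of_injOn hinj).symm
            _ ≤ (Finset.range (M / 2 + 1)).card := Finset.card_le_card himg
            _ = M / 2 + 1 := Finset.card_range _
        have := hB M hM
        omega
      have hpos : 1 ≤ B.card := Finset.Nonempty.card_pos hne
      obtain ⟨s, hs⟩ : ∃ s, B.card = s + 1 := ⟨B.card - 1, by omega⟩
      rw [hs] at hMge ⊢
      rw [hcard, hs] at IH
      simp only [Nat.add_sub_cancel] at IH
      rw [hsum]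
      have : (s + 1) ^ 2 = s ^ 2 + (2 * s + 1) := by ring
      omega

lemma fact5_list_prod (L : List ℕ) (h : ∀ u ∈ L, u ≠ 0) :
    (L.prod).factorization 5 = (L.map (fun u => u.factorization 5)).sum := by
  induction L with
  | nil => simp
  | cons a l ihl =>
    have ha : a ≠ 0 := h a List.mem_cons_self
    have hl : ∀ u ∈ l, u ≠ 0 := fun u hu => h u (List.mem_cons_of_mem a hu)
    have hlp : l.prod ≠ 0 := by
      intro hc
      exact absurd hc (by
        have : 0 < l.prod := List.prod_pos fun u hu => Nat.pos_of_ne_zero (hl u hu)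
        omega)
    simp only [List.prod_cons, List.map_cons, List.sum_cons]
    rw [Nat.factorization_mul ha hlp, Finsupp.add_apply, ihl hl]

lemma toFinset_sum_le_s15 (L : List ℕ) (g : ℕ → ℕ) :
    ∑ u ∈ L.toFinset, g u ≤ (L.map g).sum := by
  have h1 : ∑ u ∈ L.toFinset, g u = (L.dedup.map g).sum := by
    have h0 : L.dedup.toFinset = L.toFinset := List.toFinset.ext fun x => List.mem_dedup
    rw [← h0]
    exact List.sum_toFinset _ (List.nodup_dedup L)
  rw [h1]
  exact List.Sublist.sum_le_sum ((List.dedup_sublist L).map g) (fun a _ => Nat.zero_le a)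

lemma fact5_two_five (b : ℕ) : (2 * 5 ^ b).factorization 5 = b := by
  rw [Nat.factorization_mul (by norm_num) (by positivity), Finsupp.add_apply,
    Nat.Prime.factorization_pow (by norm_num)]
  simp [Nat.Prime.factorization Nat.prime_two]

lemma fact5_four : (4 : ℕ).factorization 5 = 0 := by
  rw [show (4 : ℕ) = 2 ^ 2 by norm_num, Nat.Prime.factorization_pow Nat.prime_two]
  simp

lemma fact5_forty_pow (n : ℕ) : ((40 : ℕ) ^ n).factorization 5 = n := by
  rw [Nat.factorization_pow, Finsupp.smul_apply,
    show (40 : ℕ) = 2 ^ 3 * 5 by norm_num,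
    Nat.factorization_mul (by norm_num) (by norm_num), Finsupp.add_apply,
    Nat.Prime.factorization_pow Nat.prime_two,
    Nat.Prime.factorization (by norm_num : Nat.Prime 5)]
  simp

lemma prod_map_f (k : ℕ) :
    ((List.range k).map (fun i => 2 * 5 ^ (2 * i + 1))).prod = 2 ^ k * 5 ^ (k ^ 2) := by
  induction k with
  | zero => simp
  | succ k ih =>
    rw [List.range_succ, List.map_append, List.prod_append, ih]
    simp only [List.map_cons, List.map_nil, List.prod_cons, List.prod_nil, mul_one]
    have h1 : (k + 1) ^ 2 = k ^ 2 + (2 * k + 1) := by ring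
    rw [h1, pow_add, pow_succ]
    ring

lemma exists_c (k : ℕ) : ∃ c, 2 * c + k = k ^ 2 := by
  have hpar : k ^ 2 % 2 = k % 2 := by
    rw [Nat.pow_mod]
    rcases Nat.mod_two_eq_zero_or_one k with h | h <;> simp [h]
  have hk2 : k ≤ k ^ 2 := Nat.le_self_pow two_ne_zero k
  refine ⟨(k ^ 2 - k) / 2, ?_⟩
  generalize hK : k ^ 2 = K at *
  omega

theorem stmt15 (k : ℕ) (hk : 1 ≤ k) (n : ℕ) (h1 : k ^ 2 ≤ n) (h2 : n < (k + 1) ^ 2) :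
    IsGreatest {m | ∃ L : List ℕ, (∀ u ∈ L, IsAtom46 u) ∧ L.prod = 40 ^ n ∧
      m = L.toFinset.card} (k + 1) := by
  have hn1 : 1 ≤ n := le_trans (Nat.one_le_pow _ _ hk) h1
  have h40 : (40 : ℕ) ^ n = 2 ^ (3 * n) * 5 ^ n := by
    rw [show (40 : ℕ) = 2 ^ 3 * 5 by norm_num, mul_pow, ← pow_mul]
  constructor
  · -- membership
    obtain ⟨c, h2c⟩ := exists_c k
    set f : ℕ → ℕ := fun i => 2 * 5 ^ (2 * i + 1) with hf
    refine ⟨(List.range k).map f ++ (List.replicate (n - k ^ 2) 10 ++ List.replicate (n + c) 4),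
      ?_, ?_, ?_⟩
    · intro u hu
      simp only [List.mem_append, List.mem_map, List.mem_range, List.mem_replicate] at hu
      rcases hu with ⟨i, hi, rfl⟩ | ⟨-, rfl⟩ | ⟨-, rfl⟩
      · exact isAtom46_two_five (2 * i + 1) (by omega)
      · have := isAtom46_two_five 1 (by norm_num)
        norm_num at this
        exact this
      · exact isAtom46_four
    · rw [List.prod_append, List.prod_append, prod_map_f k, List.prod_replicate,
        List.prod_replicate]
      have h10 : (10 : ℕ) ^ (n - k ^ 2) = 2 ^ (n - k ^ 2) * 5 ^ (n - k ^ 2) := by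
        rw [show (10 : ℕ) = 2 * 5 by norm_num, mul_pow]
      have h4 : (4 : ℕ) ^ (n + c) = 2 ^ (2 * (n + c)) := by
        rw [show (4 : ℕ) = 2 ^ 2 by norm_num, ← pow_mul]
      rw [h10, h4, h40]
      have e12 : k + ((n - k ^ 2) + 2 * (n + c)) = 3 * n ∧ k ^ 2 + (n - k ^ 2) = n := by
        generalize hK : k ^ 2 = K at h1 h2c ⊢
        omega
      calc 2 ^ k * 5 ^ (k ^ 2) * (2 ^ (n - k ^ 2) * 5 ^ (n - k ^ 2) * 2 ^ (2 * (n + c)))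
          = 2 ^ (k + ((n - k ^ 2) + 2 * (n + c))) * 5 ^ (k ^ 2 + (n - k ^ 2)) := by
            rw [pow_add, pow_add, pow_add]; ring
        _ = 2 ^ (3 * n) * 5 ^ n := by rw [e12.1, e12.2]
    · -- card
      have hinjf : Function.Injective f := by
        intro i j hij
        simp only [hf] at hij
        have h5 : (5 : ℕ) ^ (2 * i + 1) = 5 ^ (2 * j + 1) := by omega
        have := Nat.pow_right_injective (by norm_num : 2 ≤ 5) h5
        omega
      have hnodup : ((List.range k).map f).Nodup :=
        (List.nodup_range (n := k)).map hinjf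
      have hAcard : (((List.range k).map f).toFinset).card = k := by
        rw [List.toFinset_card_of_nodup hnodup, List.length_map, List.length_range]
      have hT : ((List.range k).map f ++ (List.replicate (n - k ^ 2) 10 ++
          List.replicate (n + c) 4)).toFinset
          = insert 4 (((List.range k).map f).toFinset) := by
        ext x
        simp only [List.mem_toFinset, List.mem_append, List.mem_map, List.mem_range,
          List.mem_replicate, Finset.mem_insert]
        constructor
        · rintro (⟨i, hi, rfl⟩ | ⟨-, rfl⟩ | ⟨-, rfl⟩)
          · exact Or.inr ⟨i, hi, rfl⟩
          · refine Or.inr ⟨0, by omega, ?_⟩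
            simp [hf]
          · exact Or.inl rfl
        · rintro (rfl | ⟨i, hi, rfl⟩)
          · exact Or.inr (Or.inr ⟨by omega, rfl⟩)
          · exact Or.inl ⟨i, hi, rfl⟩
      have h4A : 4 ∉ ((List.range k).map f).toFinset := by
        intro hmem
        obtain ⟨i, -, hfi⟩ := List.mem_map.mp (List.mem_toFinset.mp hmem)
        have h5 : (5 : ℕ) ^ 1 ≤ 5 ^ (2 * i + 1) := Nat.pow_le_pow_right (by norm_num) (by omega)
        simp only [hf] at hfi
        simp at h5
        omega
      rw [hT, Finset.card_insert_of_notMem h4A, hAcard]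
  · -- upper bound
    rintro m ⟨L, hatoms, hprod, rfl⟩
    have hdvd : ∀ u ∈ L, u ∣ 2 ^ (3 * n) * 5 ^ n := by
      intro u hu
      have hd := List.dvd_prod hu
      rw [hprod, h40] at hd
      exact hd
    set g : ℕ → ℕ := fun u => u.factorization 5 with hg
    set T := L.toFinset.erase 4 with hTdef
    have hclass : ∀ u ∈ T, u = 2 * 5 ^ (g u) ∧ (g u) % 2 = 1 := by
      intro u hu
      have huL : u ∈ L := List.mem_toFinset.mp (Finset.mem_of_mem_erase hu)
      have hne4 : u ≠ 4 := Finset.ne_of_mem_erase hu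
      rcases atom_classify u (hatoms u huL) _ _ (hdvd u huL) with h | ⟨b, hb, rfl⟩
      · exact absurd h hne4
      · have : g (2 * 5 ^ b) = b := by rw [hg]; exact fact5_two_five b
        rw [this]
        exact ⟨rfl, hb⟩
    have hinj : Set.InjOn g T := by
      intro x hx y hy hxy
      rw [(hclass x hx).1, (hclass y hy).1, hxy]
    have hsum : ∑ u ∈ T, g u ≤ n := by
      calc ∑ u ∈ T, g u ≤ ∑ u ∈ L.toFinset, g u :=
            Finset.sum_le_sum_of_subset (Finset.erase_subset _ _)
        _ ≤ (L.map g).sum := toFinset_sum_le_s15 L g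
        _ = (L.prod).factorization 5 :=
            (fact5_list_prod L (fun u hu => by have := (hatoms u hu).2.1; omega)).symm
        _ = n := by rw [hprod, fact5_forty_pow]
    have hodd : ∀ b ∈ T.image g, b % 2 = 1 := by
      intro b hb
      obtain ⟨u, hu, rfl⟩ := Finset.mem_image.mp hb
      exact (hclass u hu).2
    have hcard : T.card ^ 2 ≤ n := by
      have hge := odd_sum_ge (T.image g) hodd
      rw [Finset.card_image_of_injOn hinj,
        Finset.sum_image (fun x hx y hy h => hinj hx hy h)] at hge
      exact le_trans hge hsum
    have hTk : T.card ≤ k := by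
      by_contra hc
      have hle : (k + 1) ^ 2 ≤ T.card ^ 2 := Nat.pow_le_pow_left (by omega) 2
      omega
    have hsub : L.toFinset ⊆ insert 4 T := by
      intro x hx
      rcases eq_or_ne x 4 with rfl | hne
      · exact Finset.mem_insert_self _ _
      · exact Finset.mem_insert_of_mem (Finset.mem_erase.mpr ⟨hne, hx⟩)
    calc L.toFinset.card ≤ (insert 4 T).card := Finset.card_le_card hsub
      _ ≤ T.card + 1 := Finset.card_insert_le _ _
      _ ≤ k + 1 := by omega
end

section
/- Fix x = 2^a · 5^b · 7^c in M_{4,6} with a ≥ 1 (so x ≡ 4 mod 6). Call an atom u = 2^p 5^q 7^r of M_{4,6} good if a(q + r) ≤ 3p(b + c) and evil otherwise. Then in any factorization of x^n into atoms of M_{4,6}, if k is the number of good atoms and m the number of evil atoms counted with multiplicity, then m ≤ 2k. -/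
/-- An atom `u = 2^p 5^q 7^r` is good (relative to `x = 2^a 5^b 7^c`) if
`a(q + r) ≤ 3p(b + c)`. -/
def IsGood (a b c u : ℕ) : Prop :=
  a * (u.factorization 5 + u.factorization 7) ≤ 3 * u.factorization 2 * (b + c)

instance (a b c u : ℕ) : Decidable (IsGood a b c u) :=
  inferInstanceAs (Decidable (_ ≤ _))

/- Auxiliary lemmas -/

lemma aux_sum_map_factorization (p : ℕ) :
    ∀ L : List ℕ, (∀ u ∈ L, u ≠ 0) →
      (L.map (fun u => u.factorization p)).sum = (L.prod).factorization p
  | [], _ => by simp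
  | (u :: L), h => by
      have hu : u ≠ 0 := h u (by simp)
      have hL : ∀ v ∈ L, v ≠ 0 := fun v hv => h v (by simp [hv])
      have hprod : L.prod ≠ 0 := List.prod_ne_zero (fun h0 => (hL 0 h0 rfl))
      simp [List.prod_cons, Nat.factorization_mul hu hprod,
        aux_sum_map_factorization p L hL]

lemma aux_filter_split_sum (p : ℕ → Bool) (f : ℕ → ℕ) :
    ∀ L : List ℕ,
      ((L.filter p).map f).sum + ((L.filter (fun u => !p u)).map f).sum
        = (L.map f).sum
  | [] => by simp
  | (u :: L) => by
      by_cases h : p u = true <;>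
        simp [List.filter_cons, h, ← aux_filter_split_sum p f L] <;> omega

lemma aux_sum_le_two_length (f : ℕ → ℕ) :
    ∀ l : List ℕ, (∀ u ∈ l, f u ≤ 2) → (l.map f).sum ≤ 2 * l.length
  | [], _ => by simp
  | (u :: l), h => by
      have h1 := h u (by simp)
      have h2 := aux_sum_le_two_length f l (fun v hv => h v (by simp [hv]))
      simp only [List.map_cons, List.sum_cons, List.length_cons]
      omega

lemma aux_length_le_sum (f : ℕ → ℕ) :
    ∀ l : List ℕ, (∀ u ∈ l, 1 ≤ f u) → l.length ≤ (l.map f).sum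
  | [], _ => by simp
  | (u :: l), h => by
      have h1 := h u (by simp)
      have h2 := aux_length_le_sum f l (fun v hv => h v (by simp [hv]))
      simp only [List.map_cons, List.sum_cons, List.length_cons]
      omega

lemma aux_evil_sum (f g : ℕ → ℕ) (d : ℕ) :
    ∀ l : List ℕ, (∀ u ∈ l, 1 + 3 * d * f u ≤ g u) →
      l.length + 3 * d * (l.map f).sum ≤ (l.map g).sum
  | [], _ => by simp
  | (u :: l), h => by
      have h1 := h u (by simp)
      have h2 := aux_evil_sum f g d l (fun v hv => h v (by simp [hv]))
      simp only [List.map_cons, List.sum_cons, List.length_cons, Nat.mul_add]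
      omega

lemma aux_map_sum_comb (f g : ℕ → ℕ) (a : ℕ) :
    ∀ l : List ℕ,
      (l.map (fun u => a * (f u + g u))).sum = a * ((l.map f).sum + (l.map g).sum)
  | [] => by simp
  | (u :: l) => by
      simp only [List.map_cons, List.sum_cons, aux_map_sum_comb f g a l]
      ring

lemma aux_f2_bounds (u : ℕ) (hu : IsAtom46 u) :
    1 ≤ u.factorization 2 ∧ u.factorization 2 ≤ 2 := by
  obtain ⟨hm, h1, hirr⟩ := hu
  have hu0 : u ≠ 0 := by omega
  have hmod : u % 6 = 4 := by
    rcases hm with h | h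
    · omega
    · exact h.2
  constructor
  · exact Nat.Prime.factorization_pos_of_dvd Nat.prime_two hu0
      (Nat.dvd_of_mod_eq_zero (by omega))
  · by_contra h
    have h3 : 3 ≤ u.factorization 2 := by omega
    have h8 : 2 ^ 3 ∣ u :=
      (Nat.Prime.pow_dvd_iff_le_factorization Nat.prime_two hu0).mpr h3
    obtain ⟨t, ht⟩ := h8
    have h4 : (4 : ℕ) ∈ M46 := Or.inr ⟨by norm_num, rfl⟩
    have hw : (2 * t : ℕ) ∈ M46 := Or.inr ⟨by omega, by omega⟩
    rcases hirr 4 (2 * t) h4 hw (by omega) with h' | h' <;> omega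

theorem stmt17 (a b c : ℕ) (ha : 1 ≤ a) (hx : 2 ^ a * 5 ^ b * 7 ^ c ∈ M46)
    (n : ℕ) (L : List ℕ) (hL : ∀ u ∈ L, IsAtom46 u)
    (hprod : L.prod = (2 ^ a * 5 ^ b * 7 ^ c) ^ n) :
    L.countP (fun u => decide (¬ IsGood a b c u)) ≤
      2 * L.countP (fun u => decide (IsGood a b c u)) := by
  classical
  set f2 : ℕ → ℕ := fun u => u.factorization 2 with hf2
  set f5 : ℕ → ℕ := fun u => u.factorization 5 with hf5
  set f7 : ℕ → ℕ := fun u => u.factorization 7 with hf7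
  set pg : ℕ → Bool := fun u => decide (IsGood a b c u) with hpg
  set pe : ℕ → Bool := fun u => decide (¬ IsGood a b c u) with hpe
  have hpe_not : pe = fun u => !pg u := by
    funext u; simp [hpe, hpg]
  have hne : ∀ u ∈ L, u ≠ 0 := fun u hu => by
    have := (hL u hu).2.1; omega
  -- total sums
  have hfac : ∀ p : ℕ, (L.map (fun u => u.factorization p)).sum
      = ((2 ^ a * 5 ^ b * 7 ^ c) ^ n).factorization p := by
    intro p; rw [aux_sum_map_factorization p L hne, hprod]
  have hS2 : (L.map f2).sum = n * a := by
    rw [hf2, hfac 2, Nat.factorization_pow,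
      Nat.factorization_mul (by positivity) (by positivity),
      Nat.factorization_mul (by positivity) (by positivity)]
    simp [Nat.prime_two.factorization, Nat.prime_five.factorization,
      (by norm_num : Nat.Prime 7).factorization, Finsupp.single_apply]
  have hS5 : (L.map f5).sum = n * b := by
    rw [hf5, hfac 5, Nat.factorization_pow,
      Nat.factorization_mul (by positivity) (by positivity),
      Nat.factorization_mul (by positivity) (by positivity)]
    simp [Nat.prime_two.factorization, Nat.prime_five.factorization,
      (by norm_num : Nat.Prime 7).factorization, Finsupp.single_apply]
  have hS7 : (L.map f7).sum = n * c := by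
    rw [hf7, hfac 7, Nat.factorization_pow,
      Nat.factorization_mul (by positivity) (by positivity),
      Nat.factorization_mul (by positivity) (by positivity)]
    simp [Nat.prime_two.factorization, Nat.prime_five.factorization,
      (by norm_num : Nat.Prime 7).factorization, Finsupp.single_apply]
  set d := b + c with hd
  set Le := L.filter pe with hLe
  set Lg := L.filter pg with hLg
  set E := (Le.map f2).sum with hE
  set G := (Lg.map f2).sum with hG
  set m := L.countP pe with hm
  set k := L.countP pg with hk
  have hmlen : m = Le.length := by rw [hm, hLe, List.countP_eq_length_filter]
  have hklen : k = Lg.length := by rw [hk, hLg, List.countP_eq_length_filter]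
  -- pointwise facts
  have hb : ∀ u ∈ L, 1 ≤ f2 u ∧ f2 u ≤ 2 := fun u hu => aux_f2_bounds u (hL u hu)
  -- key inequality for evil atoms
  have hkey : m + 3 * d * E ≤ (Le.map (fun u => a * (f5 u + f7 u))).sum := by
    rw [hmlen, hE]
    apply aux_evil_sum
    intro u hu
    rw [hLe, List.mem_filter] at hu
    have hbad : ¬ IsGood a b c u := by
      have := hu.2; rw [hpe] at this; simpa using this
    rw [IsGood] at hbad
    have : 3 * u.factorization 2 * (b + c) < a * (u.factorization 5 + u.factorization 7) :=
      Nat.lt_of_not_le hbad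
    have h' : 3 * f2 u * d < a * (f5 u + f7 u) := this
    nlinarith [h']
  -- the evil sum is at most the total sum
  have hsplit : (Lg.map (fun u => a * (f5 u + f7 u))).sum
      + (Le.map (fun u => a * (f5 u + f7 u))).sum
      = (L.map (fun u => a * (f5 u + f7 u))).sum := by
    rw [hLg, hLe, hpe_not]; exact aux_filter_split_sum pg _ L
  have htot : (L.map (fun u => a * (f5 u + f7 u))).sum = (n * a) * d := by
    rw [aux_map_sum_comb, hS5, hS7, hd]; ring
  have hE_le : (Le.map (fun u => a * (f5 u + f7 u))).sum ≤ (n * a) * d := by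
    rw [← htot, ← hsplit]; omega
  -- split of f2 sums
  have hsplit2 : G + E = (L.map f2).sum := by
    rw [hG, hE, hLg, hLe, hpe_not]; exact aux_filter_split_sum pg f2 L
  have hGE : G + E = n * a := by rw [hsplit2, hS2]
  -- bounds on G and E
  have hGk : G ≤ 2 * k := by
    rw [hG, hklen]
    exact aux_sum_le_two_length f2 Lg (fun u hu => (hb u (List.mem_filter.mp hu).1).2)
  have hmE : m ≤ E := by
    rw [hmlen, hE]
    exact aux_length_le_sum f2 Le (fun u hu => (hb u (List.mem_filter.mp hu).1).1)
  -- combine: m + 3dE ≤ nad = d(G+E) ⟹ m + 2dE ≤ dG ≤ 2dk, and m ≤ E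
  have hmain : m + 3 * d * E ≤ (G + E) * d := by
    rw [hGE]; exact le_trans hkey hE_le
  have hfin : m * (1 + 2 * d) ≤ k * (1 + 2 * d) := by nlinarith [hmain, hGk, hmE]
  have : m ≤ k := Nat.le_of_mul_le_mul_right hfin (by omega)
  omega
end

section
/- Let S = <2, 3> and for n in S let ℓ_3^m(n) be the minimum of z_1^3 + z_2^3 over all (z_1, z_2) in Z_{\ge 0}^2 with 2 z_1 + 3 z_2 = n. Then ℓ_3^m(n) is not an eventually quasipolynomial function of n; that is, there is no quasipolynomial g (a function of the form g(n) = c_d(n) n^d + ... + c_0(n) with each c_i periodic) agreeing with ℓ_3^m(n) for all sufficiently large n. -/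
set_option maxHeartbeats 1000000

open Polynomial Asymptotics Filter


noncomputable def qpS : ℝ := Real.sqrt 6
noncomputable def qpX : ℝ := (3 * qpS - 4) / 19
noncomputable def qpY : ℝ := (9 - 2 * qpS) / 19
noncomputable def qpC : ℝ := qpX ^ 3 + qpY ^ 3

lemma qpS_sq : qpS ^ 2 = 6 := Real.sq_sqrt (by norm_num)
lemma qpS_nonneg : 0 ≤ qpS := Real.sqrt_nonneg 6
lemma qpS_lb : 2.4 ≤ qpS := by nlinarith [qpS_sq, qpS_nonneg]
lemma qpS_ub : qpS ≤ 2.5 := by nlinarith [qpS_sq, qpS_nonneg]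

lemma qpX_nonneg : 0 ≤ qpX := by unfold qpX; nlinarith [qpS_lb]
lemma qpX_le : qpX ≤ 1 := by unfold qpX; nlinarith [qpS_ub]
lemma qpY_nonneg : 0 ≤ qpY := by unfold qpY; nlinarith [qpS_ub]
lemma qpY_le : qpY ≤ (0.23 : ℝ) := by unfold qpY; nlinarith [qpS_lb]
lemma qpC_nonneg : 0 ≤ qpC := by unfold qpC; exact add_nonneg (pow_nonneg qpX_nonneg 3) (pow_nonneg qpY_nonneg 3)
lemma qp_sum : 2 * qpX + 3 * qpY = 1 := by unfold qpX qpY; ring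
lemma qp_sq : 2 * qpY ^ 2 = 3 * qpX ^ 2 := by
  unfold qpX qpY
  linear_combination (-(19 : ℝ)/361) * qpS_sq
lemma qp_y2 : qpY ^ 2 = 3 * qpC := by
  unfold qpC qpX qpY
  linear_combination ((76 - 57 * qpS)/6859) * qpS_sq

lemma qp_lower (a b : ℝ) (ha : 0 ≤ a) (hb : 0 ≤ b) :
    qpC * (2 * a + 3 * b) ^ 3 ≤ a ^ 3 + b ^ 3 := by
  set n : ℝ := 2 * a + 3 * b with hn
  have hnn : 0 ≤ n := by positivity
  have h1 : 0 ≤ (a - qpX * n) ^ 2 * (a + 2 * qpX * n) := by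
    apply mul_nonneg (sq_nonneg _)
    have := qpX_nonneg; nlinarith
  have h2 : 0 ≤ (b - qpY * n) ^ 2 * (b + 2 * qpY * n) := by
    apply mul_nonneg (sq_nonneg _)
    have := qpY_nonneg; nlinarith
  have e1 : a ^ 3 - (3 * qpX ^ 2 * n ^ 2 * a - 2 * qpX ^ 3 * n ^ 3)
      = (a - qpX * n) ^ 2 * (a + 2 * qpX * n) := by ring
  have e2 : b ^ 3 - (3 * qpY ^ 2 * n ^ 2 * b - 2 * qpY ^ 3 * n ^ 3)
      = (b - qpY * n) ^ 2 * (b + 2 * qpY * n) := by ring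
  have e3 : 3 * qpX ^ 2 * n ^ 2 * a + 3 * qpY ^ 2 * n ^ 2 * b = qpY ^ 2 * n ^ 3 := by
    rw [hn]; linear_combination (-((2*a+3*b) ^ 2 * a)) * qp_sq
  have e4 : qpY ^ 2 * n ^ 3 - 2 * qpC * n ^ 3 = qpC * n ^ 3 := by
    linear_combination (n ^ 3) * qp_y2
  have hcd : qpC = qpX ^ 3 + qpY ^ 3 := rfl
  have e5 : 2 * qpX ^ 3 * n ^ 3 + 2 * qpY ^ 3 * n ^ 3 = 2 * qpC * n ^ 3 := by rw [hcd]; ring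
  linarith [h1, h2, e1, e2, e3, e4, e5]


lemma qp_upper (n : ℕ) (hn : 20 ≤ n) :
    ∃ z1 z2 : ℕ, 2 * z1 + 3 * z2 = n ∧
      ((z1 : ℝ) ^ 3 + (z2 : ℝ) ^ 3) ≤ qpC * (n : ℝ) ^ 3 + 26 * (n : ℝ) ^ 2 := by
  have hnR : (20 : ℝ) ≤ (n : ℝ) := by exact_mod_cast hn
  set w : ℕ := ⌊qpY * n / 2⌋₊ with hw
  set z2 : ℕ := 2 * w + n % 2 with hz2
  have hwle : (w : ℝ) ≤ qpY * n / 2 := Nat.floor_le (by have := qpY_nonneg; positivity)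
  have hwgt : qpY * n / 2 < (w : ℝ) + 1 := Nat.lt_floor_add_one _
  have hmod : ((n % 2 : ℕ) : ℝ) ≤ 1 := by
    have : n % 2 ≤ 1 := by omega
    exact_mod_cast this
  have hz2le : (z2 : ℝ) ≤ qpY * n + 1 := by
    rw [hz2]; push_cast; linarith
  have hz2ge : qpY * n - 2 ≤ (z2 : ℝ) := by
    rw [hz2]; push_cast
    have : ((n % 2 : ℕ) : ℝ) ≥ 0 := by positivity
    linarith
  have h3z2 : 3 * z2 ≤ n := by
    have hR : 3 * (z2 : ℝ) ≤ (n : ℝ) := by nlinarith [qpY_le, qpY_nonneg]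
    exact_mod_cast (by push_cast at hR ⊢; linarith : ((3 * z2 : ℕ) : ℝ) ≤ (n : ℝ))
  refine ⟨(n - 3 * z2) / 2, z2, ?_, ?_⟩
  · omega
  · have hz1 : (((n - 3 * z2) / 2 : ℕ) : ℝ) = ((n : ℝ) - 3 * z2) / 2 := by
      have h2 : 2 * ((n - 3 * z2) / 2) = n - 3 * z2 := by omega
      have h4 := congrArg (Nat.cast : ℕ → ℝ) h2
      push_cast [h3z2] at h4
      linarith
    rw [hz1]
    have hz1le : ((n : ℝ) - 3 * z2) / 2 ≤ qpX * n + 3 := by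
      have h2x : 1 - 3 * qpY = 2 * qpX := by linarith [qp_sum]
      nlinarith [hz2ge]
    have hz1nn : 0 ≤ ((n : ℝ) - 3 * z2) / 2 := by
      have : (3 * (z2:ℝ)) ≤ (n:ℝ) := by exact_mod_cast (by push_cast; exact_mod_cast h3z2 : ((3*z2 : ℕ):ℝ) ≤ (n:ℝ))
      linarith
    have c1 : (((n : ℝ) - 3 * z2) / 2) ^ 3 ≤ (qpX * n + 3) ^ 3 :=
      pow_le_pow_left₀ hz1nn hz1le 3
    have c2 : (z2 : ℝ) ^ 3 ≤ (qpY * n + 1) ^ 3 :=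
      pow_le_pow_left₀ (by positivity) hz2le 3
    have hcd : qpC = qpX ^ 3 + qpY ^ 3 := rfl
    have hx2 : qpX ^ 2 ≤ 1 := by nlinarith [qpX_nonneg, qpX_le]
    have hy2 : qpY ^ 2 ≤ (0.0529 : ℝ) := by nlinarith [qpY_nonneg, qpY_le]
    have b1 : qpX ^ 2 * (n:ℝ) ^ 2 ≤ (n:ℝ) ^ 2 := by
      nlinarith [mul_le_mul_of_nonneg_right hx2 (sq_nonneg ((n:ℝ)))]
    have b2 : qpY ^ 2 * (n:ℝ) ^ 2 ≤ (0.0529 : ℝ) * (n:ℝ) ^ 2 :=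
      mul_le_mul_of_nonneg_right hy2 (sq_nonneg _)
    have hn0 : (0:ℝ) ≤ (n:ℝ) := by linarith
    have b3 : qpX * (n:ℝ) ≤ (n:ℝ) := by have := mul_le_mul_of_nonneg_right qpX_le hn0; linarith
    have b4 : qpY * (n:ℝ) ≤ (0.23:ℝ) * (n:ℝ) := mul_le_mul_of_nonneg_right qpY_le hn0
    have b5 : 20 * (n:ℝ) ≤ (n:ℝ) ^ 2 := by nlinarith [hnR, hn0]
    have e0 : qpC * (n:ℝ) ^ 3 = qpX ^ 3 * (n:ℝ) ^ 3 + qpY ^ 3 * (n:ℝ) ^ 3 := by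
      rw [hcd]; ring
    have e1 : (qpX * (n:ℝ) + 3) ^ 3
        = qpX ^ 3 * (n:ℝ) ^ 3 + 9 * (qpX ^ 2 * (n:ℝ) ^ 2) + 27 * (qpX * (n:ℝ)) + 27 := by ring
    have e2 : (qpY * (n:ℝ) + 1) ^ 3
        = qpY ^ 3 * (n:ℝ) ^ 3 + 3 * (qpY ^ 2 * (n:ℝ) ^ 2) + 3 * (qpY * (n:ℝ)) + 1 := by ring
    linarith [c1, c2, b1, b2, b3, b4, b5, hnR, e0, e1, e2]


lemma qpC_eq : qpC = (35 - 12 * qpS) / 361 := by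
  unfold qpC qpX qpY
  linear_combination (qpS / 361) * qpS_sq

unseal Nat.sqrt.iter in
lemma qpS_irr : Irrational qpS := by
  have h6 : Irrational (Real.sqrt ((6 : ℕ) : ℝ)) :=
    irrational_sqrt_natCast_iff.mpr (by decide)
  have : ((6 : ℕ) : ℝ) = (6 : ℝ) := by norm_num
  rw [this] at h6
  exact h6


lemma qp_deg_le (p : ℝ[X]) (C : ℝ) (j : ℕ)
    (h : ∀ k : ℕ, |p.eval (k : ℝ)| ≤ C * ((k : ℝ) + 1) ^ j) : p.natDegree ≤ j := by
  by_contra hc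
  push_neg at hc
  have hp : p ≠ 0 := by
    intro h0
    rw [h0, natDegree_zero] at hc
    omega
  have hL : p.leadingCoeff ≠ 0 := leadingCoeff_ne_zero.mpr hp
  have hLpos : 0 < |p.leadingCoeff| := abs_pos.mpr hL
  have hCnn : (0:ℝ) ≤ C := by
    have h0 := h 0
    have h1 : (0:ℝ) ≤ |p.eval ((0:ℕ) : ℝ)| := abs_nonneg _
    simpa using le_trans h1 h0
  have hlo := p.isEquivalent_atTop_lead.isLittleO
  have hev := hlo.def (by norm_num : (0:ℝ) < 1/2)
  rw [eventually_atTop] at hev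
  obtain ⟨X0, hX0⟩ := hev
  obtain ⟨k, hk⟩ := exists_nat_gt
    (max (max X0 1) (2 * (2 ^ j * C) / |p.leadingCoeff|))
  have hkX0 : X0 ≤ (k : ℝ) :=
    le_of_lt (lt_of_le_of_lt ((le_max_left X0 1).trans (le_max_left _ _)) hk)
  have hk1 : (1 : ℝ) ≤ (k : ℝ) :=
    le_of_lt (lt_of_le_of_lt ((le_max_right X0 1).trans (le_max_left _ _)) hk)
  have hkC : 2 * (2 ^ j * C) / |p.leadingCoeff| < (k : ℝ) :=
    lt_of_le_of_lt (le_max_right _ _) hk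
  have hk0 : (0 : ℝ) ≤ (k : ℝ) := by linarith
  have hb := hX0 (k : ℝ) hkX0
  simp only [Pi.sub_apply, Real.norm_eq_abs] at hb
  have habs : |p.leadingCoeff * (k:ℝ) ^ p.natDegree|
      = |p.leadingCoeff| * (k:ℝ) ^ p.natDegree := by
    rw [abs_mul, abs_pow, abs_of_nonneg hk0]
  have hlow : |p.leadingCoeff| * (k:ℝ) ^ p.natDegree / 2 ≤ |p.eval (k : ℝ)| := by
    have h1 := abs_sub_abs_le_abs_sub (p.leadingCoeff * (k:ℝ) ^ p.natDegree) (eval (k:ℝ) p)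
    rw [abs_sub_comm, habs] at h1
    rw [habs] at hb
    linarith
  have hpe : (k:ℝ) ^ j * (k:ℝ) ≤ (k:ℝ) ^ p.natDegree := by
    rw [← pow_succ]
    exact pow_le_pow_right₀ hk1 hc
  have m1 : |p.leadingCoeff| * ((k:ℝ) ^ j * (k:ℝ))
      ≤ |p.leadingCoeff| * (k:ℝ) ^ p.natDegree :=
    mul_le_mul_of_nonneg_left hpe hLpos.le
  have hkj : (0:ℝ) < (k:ℝ) ^ j := pow_pos (by linarith) j
  have hup2 : |p.eval (k : ℝ)| ≤ C * (2 ^ j * (k:ℝ) ^ j) := by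
    refine (h k).trans ?_
    have hkk : ((k:ℝ) + 1) ^ j ≤ (2 * (k:ℝ)) ^ j :=
      pow_le_pow_left₀ (by linarith) (by linarith) j
    calc C * ((k:ℝ) + 1) ^ j ≤ C * (2 * (k:ℝ)) ^ j := mul_le_mul_of_nonneg_left hkk hCnn
      _ = C * (2 ^ j * (k:ℝ) ^ j) := by rw [mul_pow]
  have hkC' : 2 * (2 ^ j * C) < (k:ℝ) * |p.leadingCoeff| := (div_lt_iff₀ hLpos).mp hkC
  have m2 : (2 * (2 ^ j * C)) * (k:ℝ) ^ j < ((k:ℝ) * |p.leadingCoeff|) * (k:ℝ) ^ j :=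
    mul_lt_mul_of_pos_right hkC' hkj
  nlinarith [m1, m2, hlow, hup2]

/-- `g : ℕ → ℝ` is a quasipolynomial if it is a sum `∑ i, c i n * n ^ i`
with each coefficient function `c i` periodic. -/
def IsQuasipolynomial (g : ℕ → ℝ) : Prop :=
  ∃ (d : ℕ) (c : Fin (d + 1) → ℕ → ℝ),
    (∀ i, ∃ p, 0 < p ∧ ∀ n, c i (n + p) = c i n) ∧
    ∀ n, g n = ∑ i : Fin (d + 1), c i n * (n : ℝ) ^ (i : ℕ)

theorem stmt19 :
    ¬ ∃ g : ℕ → ℝ, IsQuasipolynomial g ∧ ∃ N : ℕ, ∀ n ≥ N,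
      ∀ m : ℕ, IsLeast {l | ∃ z₁ z₂ : ℕ, 2 * z₁ + 3 * z₂ = n ∧ l = z₁ ^ 3 + z₂ ^ 3} m →
        (m : ℝ) = g n := by
  rintro ⟨g, ⟨d, c, hper, hrepr⟩, N, hN⟩
  choose per hper_pos hper_eq using hper
  set P : ℕ := ∏ i : Fin (d + 1), per i with hPdef
  have hPpos : 0 < P := Finset.prod_pos fun i _ => hper_pos i
  have hcP : ∀ (i : Fin (d + 1)) (k n : ℕ), c i (n + k * P) = c i n := by
    intro i k n
    obtain ⟨t, ht⟩ : per i ∣ P := Finset.dvd_prod_of_mem per (Finset.mem_univ i)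
    have base : ∀ m n, c i (n + m * per i) = c i n := by
      intro m
      induction m with
      | zero => intro n; simp
      | succ m ih =>
        intro n
        have h1 : n + (m + 1) * per i = (n + m * per i) + per i := by ring
        rw [h1, hper_eq i, ih]
    have h2 : k * P = (k * t) * per i := by rw [ht]; ring
    rw [h2, base]
  set a : ℕ := max N 20 with hadef
  have haN : N ≤ a := le_max_left _ _
  have ha20 : 20 ≤ a := le_max_right _ _
  -- the polynomial along the AP k ↦ a + k * P
  set q : ℝ[X] := ∑ i : Fin (d + 1),
      Polynomial.C (c i a) * (Polynomial.C (P : ℝ) * Polynomial.X + Polynomial.C (a : ℝ)) ^ (i : ℕ)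
    with hqdef
  have heval : ∀ k : ℕ, q.eval (k : ℝ) = g (a + k * P) := by
    intro k
    rw [hrepr (a + k * P), hqdef]
    rw [Polynomial.eval_finset_sum]
    refine Finset.sum_congr rfl fun i _ => ?_
    rw [hcP i k a]
    simp only [eval_mul, eval_pow, eval_add, eval_C, eval_X]
    push_cast
    ring
  -- minimum values along the AP
  have hmk : ∀ k : ℕ, ∃ m : ℕ, (m : ℝ) = q.eval (k : ℝ) ∧
      qpC * ((a : ℝ) + k * P) ^ 3 ≤ (m : ℝ) ∧
      (m : ℝ) ≤ qpC * ((a : ℝ) + k * P) ^ 3 + 26 * ((a : ℝ) + k * P) ^ 2 := by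
    intro k
    set n : ℕ := a + k * P with hndef
    have hn20 : 20 ≤ n := le_trans ha20 (Nat.le_add_right _ _)
    have hcast : ((n : ℕ) : ℝ) = (a : ℝ) + k * P := by rw [hndef]; push_cast; ring
    obtain ⟨z1, z2, hz, hv⟩ := qp_upper n hn20
    have hne : {l | ∃ z₁ z₂ : ℕ, 2 * z₁ + 3 * z₂ = n ∧ l = z₁ ^ 3 + z₂ ^ 3}.Nonempty :=
      ⟨z1 ^ 3 + z2 ^ 3, z1, z2, hz, rfl⟩
    set m : ℕ := sInf {l | ∃ z₁ z₂ : ℕ, 2 * z₁ + 3 * z₂ = n ∧ l = z₁ ^ 3 + z₂ ^ 3} with hmdef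
    have hls : IsLeast {l | ∃ z₁ z₂ : ℕ, 2 * z₁ + 3 * z₂ = n ∧ l = z₁ ^ 3 + z₂ ^ 3} m :=
      ⟨Nat.sInf_mem hne, fun b hb => Nat.sInf_le hb⟩
    refine ⟨m, ?_, ?_, ?_⟩
    · rw [hN n (le_trans haN (Nat.le_add_right _ _)) m hls, heval k]
    · obtain ⟨w1, w2, hw, hwv⟩ := hls.1
      have hwR : 2 * (w1 : ℝ) + 3 * (w2 : ℝ) = ((n : ℕ) : ℝ) := by exact_mod_cast hw
      have hlow := qp_lower (w1 : ℝ) (w2 : ℝ) (by positivity) (by positivity)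
      rw [hwR, hcast] at hlow
      have hmv : (m : ℝ) = (w1 : ℝ) ^ 3 + (w2 : ℝ) ^ 3 := by exact_mod_cast hwv
      linarith
    · have hle := hls.2 ⟨z1, z2, hz, rfl⟩
      have : ((m : ℕ) : ℝ) ≤ ((z1 ^ 3 + z2 ^ 3 : ℕ) : ℝ) := by exact_mod_cast hle
      push_cast at this
      rw [← hcast]
      linarith [hv]
  choose mf hm1 hm2 hm3 using hmk
  set M : ℝ := (a : ℝ) + P with hMdef
  have hM1 : (1 : ℝ) ≤ M := by
    rw [hMdef]
    have : (20 : ℝ) ≤ (a : ℝ) := by exact_mod_cast ha20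
    have : (0 : ℝ) ≤ (P : ℝ) := by positivity
    linarith
  have hnRle : ∀ k : ℕ, (a : ℝ) + k * P ≤ M * ((k : ℝ) + 1) := by
    intro k
    rw [hMdef]
    have h1 : (0 : ℝ) ≤ (a : ℝ) * k := by positivity
    have h2 : (0 : ℝ) ≤ (P : ℝ) := by positivity
    nlinarith [h1, h2]
  have hnRnn : ∀ k : ℕ, (0 : ℝ) ≤ (a : ℝ) + k * P := by intro k; positivity
  have hk1le : ∀ k : ℕ, ((k : ℝ) + 1) ^ 2 ≤ ((k : ℝ) + 1) ^ 3 := by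
    intro k
    have hk0 : (0:ℝ) ≤ (k:ℝ) := by positivity
    exact pow_le_pow_right₀ (by linarith) (by norm_num)
  -- growth of q
  have hgrow : ∀ k : ℕ, |q.eval (k : ℝ)|
      ≤ (qpC * M ^ 3 + 26 * M ^ 2) * ((k : ℝ) + 1) ^ 3 := by
    intro k
    have h2 := hm2 k
    have h3 := hm3 k
    have h1 := hm1 k
    have hnn : 0 ≤ q.eval (k : ℝ) := by
      rw [← h1]
      have : (0:ℝ) ≤ qpC * ((a : ℝ) + k * P) ^ 3 :=
        mul_nonneg qpC_nonneg (by positivity)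
      linarith
    rw [abs_of_nonneg hnn, ← h1]
    have c3 : ((a : ℝ) + k * P) ^ 3 ≤ M ^ 3 * ((k : ℝ) + 1) ^ 3 := by
      have := pow_le_pow_left₀ (hnRnn k) (hnRle k) 3
      rwa [mul_pow] at this
    have c2 : ((a : ℝ) + k * P) ^ 2 ≤ M ^ 2 * ((k : ℝ) + 1) ^ 2 := by
      have := pow_le_pow_left₀ (hnRnn k) (hnRle k) 2
      rwa [mul_pow] at this
    have c2' : M ^ 2 * ((k : ℝ) + 1) ^ 2 ≤ M ^ 2 * ((k : ℝ) + 1) ^ 3 :=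
      mul_le_mul_of_nonneg_left (hk1le k) (by positivity)
    have c3' : qpC * ((a : ℝ) + k * P) ^ 3 ≤ qpC * (M ^ 3 * ((k : ℝ) + 1) ^ 3) :=
      mul_le_mul_of_nonneg_left c3 qpC_nonneg
    nlinarith [c3', c2, c2', h3]
  have hdq : q.natDegree ≤ 3 := qp_deg_le q _ 3 hgrow
  -- the cubic correction polynomial
  set cub : ℝ[X] := (Polynomial.C (P : ℝ) * Polynomial.X + Polynomial.C (a : ℝ)) ^ 3 with hcub
  set pp : ℝ[X] := q - Polynomial.C qpC * cub with hpp
  have hppev : ∀ k : ℕ, pp.eval (k : ℝ) = q.eval (k : ℝ) - qpC * ((a : ℝ) + k * P) ^ 3 := by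
    intro k
    rw [hpp, hcub]
    simp only [eval_sub, eval_mul, eval_pow, eval_add, eval_C, eval_X]
    ring
  have hppgrow : ∀ k : ℕ, |pp.eval (k : ℝ)| ≤ (26 * M ^ 2) * ((k : ℝ) + 1) ^ 2 := by
    intro k
    rw [hppev k, ← hm1 k]
    have h2 := hm2 k
    have h3 := hm3 k
    have c2 : ((a : ℝ) + k * P) ^ 2 ≤ M ^ 2 * ((k : ℝ) + 1) ^ 2 := by
      have := pow_le_pow_left₀ (hnRnn k) (hnRle k) 2
      rwa [mul_pow] at this
    rw [abs_le]
    constructor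
    · nlinarith [c2, sq_nonneg ((k:ℝ)+1), sq_nonneg M]
    · nlinarith [c2]
  have hdp : pp.natDegree ≤ 2 := qp_deg_le pp _ 2 hppgrow
  have hc3pp : pp.coeff 3 = 0 :=
    Polynomial.coeff_eq_zero_of_natDegree_lt (lt_of_le_of_lt hdp (by norm_num))
  have hcubexp : cub = Polynomial.C ((P : ℝ) ^ 3) * Polynomial.X ^ 3
      + Polynomial.C (3 * (P : ℝ) ^ 2 * (a : ℝ)) * Polynomial.X ^ 2
      + Polynomial.C (3 * (P : ℝ) * (a : ℝ) ^ 2) * Polynomial.X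
      + Polynomial.C ((a : ℝ) ^ 3) := by
    rw [hcub]
    simp only [map_mul, map_pow, map_ofNat]
    ring
  have hcubc3 : cub.coeff 3 = (P : ℝ) ^ 3 := by
    rw [hcubexp]
    simp only [Polynomial.coeff_add, Polynomial.coeff_C_mul, Polynomial.coeff_X_pow,
      Polynomial.coeff_X, Polynomial.coeff_C]
    norm_num
  have hq3 : q.coeff 3 = qpC * (P : ℝ) ^ 3 := by
    have h := hc3pp
    rw [hpp, Polynomial.coeff_sub, Polynomial.coeff_C_mul, hcubc3] at h
    linarith
  -- third finite difference
  have h4 : q.natDegree < 4 := by omega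
  have hdelta : q.eval (3 : ℝ) + 3 * q.eval (1 : ℝ)
      = 3 * q.eval (2 : ℝ) + q.eval (0 : ℝ) + 6 * q.coeff 3 := by
    rw [Polynomial.eval_eq_sum_range' h4 (3 : ℝ), Polynomial.eval_eq_sum_range' h4 (1 : ℝ),
      Polynomial.eval_eq_sum_range' h4 (2 : ℝ), Polynomial.eval_eq_sum_range' h4 (0 : ℝ)]
    simp [Finset.sum_range_succ]
    ring
  have hev : ∀ k : ℕ, q.eval ((k : ℕ) : ℝ) = (mf k : ℝ) := fun k => (hm1 k).symm
  have hev3 : q.eval (3 : ℝ) = (mf 3 : ℝ) := by have := hev 3; norm_num at this; exact this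
  have hev2 : q.eval (2 : ℝ) = (mf 2 : ℝ) := by have := hev 2; norm_num at this; exact this
  have hev1 : q.eval (1 : ℝ) = (mf 1 : ℝ) := by have := hev 1; norm_num at this; exact this
  have hev0 : q.eval (0 : ℝ) = (mf 0 : ℝ) := by have := hev 0; norm_num at this; exact this
  rw [hev3, hev2, hev1, hev0, hq3] at hdelta
  -- extract rationality of qpS
  have hP0 : ((P : ℚ) : ℝ) ≠ 0 := by
    have : (0 : ℝ) < (P : ℝ) := by exact_mod_cast hPpos
    push_cast
    linarith
  set r : ℚ := (210 * (P : ℚ) ^ 3 - 361 * ((mf 3 : ℚ) + 3 * (mf 1 : ℚ) - 3 * (mf 2 : ℚ) - (mf 0 : ℚ)))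
      / (72 * (P : ℚ) ^ 3) with hrdef
  have hr : (r : ℝ) = qpS := by
    rw [hrdef]
    have hqc := qpC_eq
    have hP0' : ((P : ℝ)) ≠ 0 := by
      have : (0 : ℝ) < (P : ℝ) := by exact_mod_cast hPpos
      linarith
    push_cast
    rw [div_eq_iff (by positivity : (72 : ℝ) * (P : ℝ) ^ 3 ≠ 0)]
    rw [hqc] at hdelta
    field_simp at hdelta
    linarith
  exact qpS_irr ⟨r, hr⟩
end
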